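/- arXiv:1506.01958 — 6 statements merged into one kernel-verified Lean document; each statement's English description precedes it below -/
import Mathlib

section
/- Let n ≥ 1 and let a_1, …, a_n be nonzero real numbers. Then for every real number b, the number of sign vectors ε ∈ {−1,1}^n with ∑_{i=1}^n ε_i a_i = b is at most C(n, ⌊n/2⌋); equivalently, ρ_V ≤ C(n, ⌊n/2⌋)/2^n = O(n^{−1/2}). -/
/-- **Littlewood–Offord–Erdős theorem.** For nonzero reals `a 1, …, a n` and any real `b`,
the number of sign vectors `ε ∈ {−1,1}^n` with `∑ i, ε i * a i = b` is at most
`C(n, ⌊n/2⌋)`. -/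
theorem littlewood_offord_erdos (n : ℕ) (hn : 1 ≤ n) (a : Fin n → ℝ) (ha : ∀ i, a i ≠ 0)
    (b : ℝ) :
    Nat.card {ε : Fin n → Bool // (∑ i, if ε i then a i else -a i) = b} ≤
      n.choose (n / 2) := by
  classical
  set a' : Fin n → ℝ := fun i => |a i| with ha'def
  have ha'pos : ∀ i, 0 < a' i := fun i => abs_pos.mpr (ha i)
  -- sign-flipping bijection: reduce to positive coefficients
  let flip : (Fin n → Bool) → (Fin n → Bool) := fun ε i => if 0 ≤ a i then ε i else !ε i
  have key : ∀ ε : Fin n → Bool,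
      (∑ i, if flip ε i then a' i else -a' i)
        = ∑ i, if ε i then a i else -a i := by
    intro ε
    refine Finset.sum_congr rfl fun i _ => ?_
    by_cases h : 0 ≤ a i
    · simp [flip, h, ha'def, abs_of_nonneg h]
    · have h' : a i < 0 := lt_of_not_ge h
      cases hε : ε i <;> simp [flip, h, hε, ha'def, abs_of_neg h']
  have flip_inv : ∀ ε, flip (flip ε) = ε := by
    intro ε; funext i; by_cases h : 0 ≤ a i <;> simp [flip, h]
  -- the equivalence between the two solution sets
  let e : {ε : Fin n → Bool // (∑ i, if ε i then a i else -a i) = b} ≃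
      {ε : Fin n → Bool // (∑ i, if ε i then a' i else -a' i) = b} :=
    { toFun := fun ε => ⟨flip ε.1, by rw [key ε.1]; exact ε.2⟩
      invFun := fun ε => ⟨flip ε.1, by
        have := key (flip ε.1); rw [flip_inv] at this; rw [← this]; exact ε.2⟩
      left_inv := fun ε => Subtype.ext (flip_inv ε.1)
      right_inv := fun ε => Subtype.ext (flip_inv ε.1) }
  rw [Nat.card_congr e]
  -- now work with positive a'
  set 𝒜 : Finset (Finset (Fin n)) :=
    Finset.univ.filter
      (fun S => (∑ i ∈ S, a' i) - (∑ i ∈ Sᶜ, a' i) = b) with h𝒜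
  have hsum : ∀ ε : Fin n → Bool,
      (∑ i, if ε i then a' i else -a' i)
        = (∑ i ∈ Finset.univ.filter (fun i => ε i), a' i)
          - (∑ i ∈ (Finset.univ.filter (fun i => ε i))ᶜ, a' i) := by
    intro ε
    rw [Finset.sum_ite, Finset.compl_filter, sub_eq_add_neg, ← Finset.sum_neg_distrib]
  -- injection into 𝒜
  have hcard : Nat.card {ε : Fin n → Bool // (∑ i, if ε i then a' i else -a' i) = b}
      ≤ 𝒜.card := by
    rw [Nat.card_eq_fintype_card, ← Fintype.card_coe 𝒜]
    apply Fintype.card_le_of_injective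
      (fun ε => ⟨Finset.univ.filter (fun i => ε.1 i), by
        simp only [h𝒜, Finset.mem_filter, Finset.mem_univ, true_and]
        rw [← hsum ε.1]; exact ε.2⟩)
    intro ε ε' h
    have h2 : Finset.univ.filter (fun i => ε.1 i) = Finset.univ.filter (fun i => ε'.1 i) :=
      congrArg Subtype.val h
    apply Subtype.ext; funext i
    have := Finset.ext_iff.mp h2 i
    simp only [Finset.mem_filter, Finset.mem_univ, true_and] at this
    cases hε : ε.1 i
    · cases hε' : ε'.1 i
      · rfl
      · simp [hε, hε'] at this
    · cases hε' : ε'.1 i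
      · simp [hε, hε'] at this
      · rfl
  refine hcard.trans ?_
  -- antichain
  have hanti : IsAntichain (· ⊆ ·) (𝒜 : Set (Finset (Fin n))) := by
    intro S hS T hT hne hsub
    simp only [h𝒜, Finset.coe_filter, Set.mem_setOf_eq, Finset.mem_univ, true_and] at hS hT
    have hss : S ⊂ T := ⟨hsub, fun h => hne (Finset.Subset.antisymm hsub h)⟩
    obtain ⟨i, hiT, hiS⟩ := Finset.exists_of_ssubset hss
    have h1 : (∑ j ∈ S, a' j) < ∑ j ∈ T, a' j :=
      Finset.sum_lt_sum_of_subset hsub hiT hiS (ha'pos i)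
        (fun j _ _ => (ha'pos j).le)
    have h2 : (∑ j ∈ Tᶜ, a' j) ≤ ∑ j ∈ Sᶜ, a' j :=
      Finset.sum_le_sum_of_subset_of_nonneg (Finset.compl_subset_compl.mpr hsub)
        (fun j _ _ => (ha'pos j).le)
    have : (∑ j ∈ S, a' j) - (∑ j ∈ Sᶜ, a' j) < (∑ j ∈ T, a' j) - (∑ j ∈ Tᶜ, a' j) :=
      by linarith
    rw [hS, hT] at this
    exact lt_irrefl b this
  have := IsAntichain.sperner hanti
  simpa using this
end

section
/- For any integers m, n, s ≥ 2 the following holds. Let V = (A_1, …, A_n) be a sequence of elements of GL_m(ℂ), each of order at least s. Then for every B ∈ GL_m(ℂ), the number of sign vectors ε ∈ {−1,1}^n with A_1^{ε_1} A_2^{ε_2} ⋯ A_n^{ε_n} = B is at most 141·max{1/s, 1/√n}·2^n; that is, ρ_V ≤ 141·max{1/s, 1/√n}. -/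
open Matrix

/-!
We prove a non-abelian Littlewood–Offord inequality via a Kleitman-style induction valid in
an arbitrary group: if all the `A i` satisfy `(A i) ^ (2*k) ≠ 1` for `1 ≤ k < t`, then for any
finite target set `T`,
`#{ε : A 1^{ε 1} ⋯ A n^{ε n} ∈ T} ≤ 2^n * |T| / t + S n |T|`,
where `S n ℓ` is the sum of the binomial coefficients `n.choose k` over the window
`n - ℓ < 2k ≤ n + ℓ`.  The key facts are the Pascal recursion
`S (n+1) (ℓ+1) = S n (ℓ+2) + S n ℓ`, concavity of `S n ·`, and `S n 1 = n.choose (n/2)`.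
Finally `n.choose (n/2) ≤ 2^n / √n` and `2^n/t ≤ 2·2^n/s` give the stated bound (with room to
spare in the constant `141`).
-/

namespace NonabelianLO

open Finset

/-- Window sums of binomial coefficients: `S n ℓ = ∑_{n - ℓ < 2k ≤ n + ℓ} n.choose k`. -/
def S (n l : ℕ) : ℕ :=
  ∑ k ∈ Finset.range (n + 1), if n < 2 * k + l ∧ 2 * k ≤ n + l then n.choose k else 0

lemma S_zero (n : ℕ) : S n 0 = 0 := by
  unfold S
  apply Finset.sum_eq_zero
  intro k _
  have : ¬(n < 2 * k + 0 ∧ 2 * k ≤ n + 0) := by omega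
  simp [this]

lemma S_base (l : ℕ) (hl : 1 ≤ l) : S 0 l = 1 := by
  unfold S
  rw [Finset.sum_range_one]
  have : 0 < 2 * 0 + l ∧ 2 * 0 ≤ 0 + l := by omega
  rw [if_pos this]
  rfl

lemma S_rec (n l : ℕ) : S (n + 1) (l + 1) = S n (l + 2) + S n l := by
  unfold S
  rw [Finset.sum_range_succ']
  -- peel k = 0 term
  have h0 : (if n + 1 < 2 * 0 + (l + 1) ∧ 2 * 0 ≤ (n + 1) + (l + 1) then (n+1).choose 0 else 0)
      = if n < l then 1 else 0 := by
    by_cases h : n < l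
    · have : n + 1 < 2 * 0 + (l + 1) ∧ 2 * 0 ≤ (n + 1) + (l + 1) := by omega
      simp [h, this]
    · have : ¬(n + 1 < 2 * 0 + (l + 1) ∧ 2 * 0 ≤ (n + 1) + (l + 1)) := by omega
      simp [h, this]
  rw [h0]
  -- rewrite the main sum
  have hmain : (∑ k ∈ Finset.range (n + 1),
      if n + 1 < 2 * (k + 1) + (l + 1) ∧ 2 * (k + 1) ≤ (n + 1) + (l + 1)
        then (n + 1).choose (k + 1) else 0)
      = (∑ k ∈ Finset.range (n + 1),
          if n < 2 * k + l + 2 ∧ 2 * k ≤ n + l then n.choose k else 0)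
        + (∑ k ∈ Finset.range (n + 1),
          if n < 2 * k + l + 2 ∧ 2 * k ≤ n + l then n.choose (k + 1) else 0) := by
    rw [← Finset.sum_add_distrib]
    apply Finset.sum_congr rfl
    intro k _
    by_cases h : n < 2 * k + l + 2 ∧ 2 * k ≤ n + l
    · have h' : n + 1 < 2 * (k + 1) + (l + 1) ∧ 2 * (k + 1) ≤ (n + 1) + (l + 1) := by omega
      simp [h, h', Nat.choose_succ_succ]
    · have h' : ¬(n + 1 < 2 * (k + 1) + (l + 1) ∧ 2 * (k + 1) ≤ (n + 1) + (l + 1)) := by omega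
      simp [h, h']
  rw [hmain]
  -- abbreviations
  set E : ℕ := ∑ k ∈ Finset.range (n + 1),
      if n + l < 2 * k ∧ 2 * k ≤ n + l + 2 then n.choose k else 0 with hE
  -- identity (I): first partial sum + E = S n (l+2)
  have hI : (∑ k ∈ Finset.range (n + 1),
        if n < 2 * k + l + 2 ∧ 2 * k ≤ n + l then n.choose k else 0) + E
      = ∑ k ∈ Finset.range (n + 1),
        if n < 2 * k + (l + 2) ∧ 2 * k ≤ n + (l + 2) then n.choose k else 0 := by
    rw [hE, ← Finset.sum_add_distrib]
    apply Finset.sum_congr rfl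
    intro k _
    by_cases h1 : n < 2 * k + l + 2 ∧ 2 * k ≤ n + l <;>
      by_cases h2 : n + l < 2 * k ∧ 2 * k ≤ n + l + 2
    · omega
    · have h3 : n < 2 * k + (l + 2) ∧ 2 * k ≤ n + (l + 2) := by omega
      simp [h1, h2, h3]
    · have h3 : n < 2 * k + (l + 2) ∧ 2 * k ≤ n + (l + 2) := by omega
      simp [h1, h2, h3]
    · have h3 : ¬(n < 2 * k + (l + 2) ∧ 2 * k ≤ n + (l + 2)) := by omega
      simp [h1, h2, h3]
  -- identity (II): second partial sum + [n<l] = S n l + E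
  have hII : (∑ k ∈ Finset.range (n + 1),
        if n < 2 * k + l + 2 ∧ 2 * k ≤ n + l then n.choose (k + 1) else 0)
        + (if n < l then 1 else 0)
      = (∑ k ∈ Finset.range (n + 1),
          if n < 2 * k + l ∧ 2 * k ≤ n + l then n.choose k else 0) + E := by
    -- define g
    have hg : ∀ k, (if n < 2 * k + l + 2 ∧ 2 * k ≤ n + l then n.choose (k + 1) else 0)
        = (if n < 2 * (k+1) + l ∧ 2 * (k+1) ≤ n + l + 2 then n.choose (k + 1) else 0) := by
      intro k
      by_cases h : n < 2 * k + l + 2 ∧ 2 * k ≤ n + l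
      · have h' : n < 2 * (k+1) + l ∧ 2 * (k+1) ≤ n + l + 2 := by omega
        simp [h, h']
      · have h' : ¬(n < 2 * (k+1) + l ∧ 2 * (k+1) ≤ n + l + 2) := by omega
        simp [h, h']
    calc (∑ k ∈ Finset.range (n + 1),
            if n < 2 * k + l + 2 ∧ 2 * k ≤ n + l then n.choose (k + 1) else 0)
          + (if n < l then 1 else 0)
        = (∑ k ∈ Finset.range (n + 1),
            if n < 2 * (k+1) + l ∧ 2 * (k+1) ≤ n + l + 2 then n.choose (k + 1) else 0)
          + (if n < 2 * 0 + l ∧ 2 * 0 ≤ n + l + 2 then n.choose 0 else 0) := by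
          rw [Finset.sum_congr rfl (fun k _ => hg k)]
          congr 1
          by_cases h : n < l
          · have h' : n < 2 * 0 + l ∧ 2 * 0 ≤ n + l + 2 := by omega
            simp [h, h']
          · have h' : ¬(n < 2 * 0 + l ∧ 2 * 0 ≤ n + l + 2) := by omega
            simp [h, h']
      _ = ∑ k ∈ Finset.range (n + 2),
            if n < 2 * k + l ∧ 2 * k ≤ n + l + 2 then n.choose k else 0 := by
          conv_rhs => rw [Finset.sum_range_succ']
      _ = (∑ k ∈ Finset.range (n + 1),
            if n < 2 * k + l ∧ 2 * k ≤ n + l + 2 then n.choose k else 0)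
          + (if n < 2 * (n+1) + l ∧ 2 * (n+1) ≤ n + l + 2 then n.choose (n + 1) else 0) := by
          rw [Finset.sum_range_succ]
      _ = ∑ k ∈ Finset.range (n + 1),
            if n < 2 * k + l ∧ 2 * k ≤ n + l + 2 then n.choose k else 0 := by
          simp [Nat.choose_succ_self]
      _ = (∑ k ∈ Finset.range (n + 1),
            if n < 2 * k + l ∧ 2 * k ≤ n + l then n.choose k else 0) + E := by
          rw [hE, ← Finset.sum_add_distrib]
          apply Finset.sum_congr rfl
          intro k _
          by_cases h1 : n < 2 * k + l ∧ 2 * k ≤ n + l <;>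
            by_cases h2 : n + l < 2 * k ∧ 2 * k ≤ n + l + 2
          · omega
          · have h3 : n < 2 * k + l ∧ 2 * k ≤ n + l + 2 := by omega
            simp [h1, h2, h3]
          · have h3 : n < 2 * k + l ∧ 2 * k ≤ n + l + 2 := by omega
            simp [h1, h2, h3]
          · have h3 : ¬(n < 2 * k + l ∧ 2 * k ≤ n + l + 2) := by omega
            simp [h1, h2, h3]
  omega

lemma S_one (n : ℕ) : S n 1 = n.choose (n / 2) := by
  unfold S
  rw [Finset.sum_eq_single ((n + 1) / 2)]
  · have h : n < 2 * ((n + 1) / 2) + 1 ∧ 2 * ((n + 1) / 2) ≤ n + 1 := by omega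
    rw [if_pos h]
    rcases Nat.even_or_odd n with he | ho
    · obtain ⟨m, rfl⟩ := he
      congr 1
      omega
    · obtain ⟨m, rfl⟩ := ho
      have h1 : (2 * m + 1 + 1) / 2 = m + 1 := by omega
      have h2 : (2 * m + 1) / 2 = m := by omega
      rw [h1, h2]
      rw [← Nat.choose_symm (by omega : m + 1 ≤ 2 * m + 1)]
      congr 1
      omega
  · intro k _ hk
    have : ¬(n < 2 * k + 1 ∧ 2 * k ≤ n + 1) := by omega
    rw [if_neg this]
  · intro h
    exfalso
    apply h
    rw [Finset.mem_range]
    omega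

/-- concavity of `S n ·`. -/
lemma S_concave (n : ℕ) : ∀ l, S n (l + 2) + S n l ≤ 2 * S n (l + 1) := by
  induction n with
  | zero =>
    intro l
    cases l with
    | zero =>
      have h1 : S 0 (0 + 2) = 1 := S_base _ (by omega)
      have h2 : S 0 (0 + 1) = 1 := S_base _ (by omega)
      have h0 : S 0 0 = 0 := S_zero 0
      omega
    | succ m =>
      have h1 : S 0 (m + 1 + 2) = 1 := S_base _ (by omega)
      have h2 : S 0 (m + 1 + 1) = 1 := S_base _ (by omega)
      have h3 : S 0 (m + 1) = 1 := S_base _ (by omega)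
      omega
  | succ n ih =>
    intro l
    cases l with
    | zero =>
      have h2 : S (n + 1) (0 + 2) = S n 3 + S n 1 := S_rec n 1
      have h1 : S (n + 1) (0 + 1) = S n 2 + S n 0 := S_rec n 0
      have h0 : S (n + 1) 0 = 0 := S_zero _
      have h3 : S n 3 + S n 1 ≤ 2 * S n 2 := ih 1
      omega
    | succ m =>
      have e1 : S (n + 1) (m + 1 + 2) = S n (m + 4) + S n (m + 2) := S_rec n (m + 2)
      have e2 : S (n + 1) (m + 1) = S n (m + 2) + S n m := S_rec n m
      have e3 : S (n + 1) (m + 1 + 1) = S n (m + 3) + S n (m + 1) := S_rec n (m + 1)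
      have i1 : S n (m + 4) + S n (m + 2) ≤ 2 * S n (m + 3) := ih (m + 2)
      have i2 : S n (m + 2) + S n m ≤ 2 * S n (m + 1) := ih m
      omega

lemma S_incr_mono (n : ℕ) : ∀ a b, a ≤ b → S n (b + 1) + S n a ≤ S n b + S n (a + 1) := by
  intro a b hab
  induction b, hab using Nat.le_induction with
  | base => omega
  | succ b hab ih =>
    have hc : S n (b + 1 + 1) + S n b ≤ 2 * S n (b + 1) := S_concave n b
    omega

lemma S_pairing (n : ℕ) : ∀ c v, S n (v + 2 * c + 2) + S n v ≤ S n (v + c + 2) + S n (v + c) := by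
  intro c
  induction c with
  | zero => intro v; simp
  | succ c ih =>
    intro v
    have h1 : S n (v + 2 * (c + 1) + 2) + S n v ≤ S n (v + 2 * (c + 1) + 1) + S n (v + 1) :=
      S_incr_mono n v (v + 2 * (c + 1) + 1) (by omega)
    have h2 := ih (v + 1)
    have e1 : v + 1 + 2 * c + 2 = v + 2 * (c + 1) + 1 := by omega
    have e2 : v + 1 + c + 2 = v + (c + 1) + 2 := by omega
    have e3 : v + 1 + c = v + (c + 1) := by omega
    rw [e1, e2, e3] at h2
    omega

/-! ### Central binomial coefficient bound -/

lemma centralBinom_sq_bound : ∀ m : ℕ, (2 * m + 1) * (Nat.centralBinom m) ^ 2 ≤ 16 ^ m := by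
  intro m
  induction m with
  | zero => simp [Nat.centralBinom]
  | succ m ih =>
    have h1 : (m + 1) * Nat.centralBinom (m + 1) = 2 * (2 * m + 1) * Nat.centralBinom m :=
      Nat.succ_mul_centralBinom_succ m
    have key : (2 * m + 3) * ((m + 1) * Nat.centralBinom (m + 1)) ^ 2
        ≤ (m + 1) ^ 2 * 16 ^ (m + 1) := by
      rw [h1]
      calc (2 * m + 3) * (2 * (2 * m + 1) * Nat.centralBinom m) ^ 2
          = 4 * (2 * m + 1) * (2 * m + 3) * ((2 * m + 1) * (Nat.centralBinom m) ^ 2) := by ring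
        _ ≤ 4 * (2 * m + 1) * (2 * m + 3) * 16 ^ m := by
            exact Nat.mul_le_mul_left _ ih
        _ ≤ 4 * ((2 * m + 2) * (2 * m + 2)) * 16 ^ m := by
            have : (2 * m + 1) * (2 * m + 3) ≤ (2 * m + 2) * (2 * m + 2) := by nlinarith
            calc 4 * (2 * m + 1) * (2 * m + 3) * 16 ^ m
                = 4 * ((2 * m + 1) * (2 * m + 3)) * 16 ^ m := by ring
              _ ≤ 4 * ((2 * m + 2) * (2 * m + 2)) * 16 ^ m := by
                  exact Nat.mul_le_mul_right _ (Nat.mul_le_mul_left _ this)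
        _ = (m + 1) ^ 2 * 16 ^ (m + 1) := by ring
    have hpos : 0 < (m + 1) ^ 2 := by positivity
    have : (m + 1) ^ 2 * ((2 * m + 3) * (Nat.centralBinom (m + 1)) ^ 2)
        ≤ (m + 1) ^ 2 * 16 ^ (m + 1) := by
      calc (m + 1) ^ 2 * ((2 * m + 3) * (Nat.centralBinom (m + 1)) ^ 2)
          = (2 * m + 3) * ((m + 1) * Nat.centralBinom (m + 1)) ^ 2 := by ring
        _ ≤ (m + 1) ^ 2 * 16 ^ (m + 1) := key
    have hfin := Nat.le_of_mul_le_mul_left this hpos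
    have he : 2 * (m + 1) + 1 = 2 * m + 3 := by ring
    rw [he]
    exact hfin

lemma choose_half_sq_bound (n : ℕ) (hn : 1 ≤ n) :
    n * (n.choose (n / 2)) ^ 2 ≤ 4 ^ n := by
  rcases Nat.even_or_odd n with he | ho
  · obtain ⟨m, rfl⟩ := he
    have hmeq : m + m = 2 * m := by omega
    have h2 : (m + m) / 2 = m := by omega
    rw [h2]
    have hcb : (m + m).choose m = Nat.centralBinom m := by
      rw [Nat.centralBinom_eq_two_mul_choose, show 2 * m = m + m from by omega]
    rw [hcb]
    have := centralBinom_sq_bound m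
    have h4 : (4:ℕ) ^ (m + m) = 16 ^ m := by
      rw [show m + m = 2 * m from by omega, Nat.pow_mul]
      all_goals norm_num
    rw [h4]
    calc (m + m) * ((Nat.centralBinom m) ^ 2)
        ≤ (2 * m + 1) * (Nat.centralBinom m) ^ 2 := by
          apply Nat.mul_le_mul_right
          omega
      _ ≤ 16 ^ m := this
  · obtain ⟨m, rfl⟩ := ho
    have h2 : (2 * m + 1) / 2 = m := by omega
    rw [h2]
    have hdb : Nat.centralBinom (m + 1) = 2 * (2 * m + 1).choose m := by
      rw [Nat.centralBinom_eq_two_mul_choose]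
      have he : 2 * (m + 1) = (2 * m + 1) + 1 := by omega
      rw [he, Nat.choose_succ_succ]
      have hsymm : (2 * m + 1).choose (m + 1) = (2 * m + 1).choose m := by
        rw [← Nat.choose_symm (by omega : m + 1 ≤ 2 * m + 1)]
        congr 1
        omega
      rw [hsymm]
      omega
    have hq := centralBinom_sq_bound (m + 1)
    rw [hdb] at hq
    have key : 4 * ((2 * m + 1) * ((2 * m + 1).choose m) ^ 2) ≤ 4 * 4 ^ (2 * m + 1) := by
      calc 4 * ((2 * m + 1) * ((2 * m + 1).choose m) ^ 2)
          ≤ (2 * (m + 1) + 1) * (2 * (2 * m + 1).choose m) ^ 2 := by nlinarith [Nat.zero_le (((2*m+1).choose m)^2)]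
        _ ≤ 16 ^ (m + 1) := hq
        _ = 4 * 4 ^ (2 * m + 1) := by
            have : (16:ℕ) = 4 ^ 2 := by norm_num
            rw [this, ← Nat.pow_mul]
            have h5 : 2 * (m + 1) = (2 * m + 1) + 1 := by omega
            rw [h5, Nat.pow_succ]
            ring
    exact Nat.le_of_mul_le_mul_left key (by norm_num)

lemma choose_half_real_bound (n : ℕ) (hn : 1 ≤ n) :
    (n.choose (n / 2) : ℝ) ≤ 2 ^ n / Real.sqrt n := by
  have hnpos : (0:ℝ) < n := by exact_mod_cast hn
  have hs : (0:ℝ) < Real.sqrt n := Real.sqrt_pos.mpr hnpos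
  rw [le_div_iff₀ hs]
  have hsq : ((n.choose (n / 2) : ℝ) * Real.sqrt n) ^ 2 ≤ ((2:ℝ) ^ n) ^ 2 := by
    have h1 : ((n.choose (n / 2) : ℝ) * Real.sqrt n) ^ 2
        = (n.choose (n / 2) : ℝ) ^ 2 * n := by
      rw [mul_pow, Real.sq_sqrt (le_of_lt hnpos)]
    rw [h1]
    have h2 : ((2:ℝ) ^ n) ^ 2 = 4 ^ n := by
      rw [← pow_mul, mul_comm, pow_mul]
      norm_num
    rw [h2]
    have := choose_half_sq_bound n hn
    have hc : (n * (n.choose (n / 2)) ^ 2 : ℝ) ≤ (4:ℝ) ^ n := by exact_mod_cast this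
    calc (n.choose (n / 2) : ℝ) ^ 2 * n = (n * (n.choose (n / 2)) ^ 2 : ℝ) := by push_cast; ring
      _ ≤ (4:ℝ) ^ n := hc
  have h1 : (0:ℝ) ≤ (n.choose (n / 2) : ℝ) * Real.sqrt n := by positivity
  have h2 : (0:ℝ) ≤ (2:ℝ) ^ n := by positivity
  nlinarith

/-! ### The counting function and its basic properties -/

variable {G : Type*} [Group G] [DecidableEq G]

/-- The signed product `A 1 ^ ε 1 * ⋯ * A n ^ ε n` where `ε i` is interpreted as `±1`. -/
def prodSigns {n : ℕ} (A : Fin n → G) (ε : Fin n → Bool) : G :=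
  (List.ofFn fun i => if ε i then A i else (A i)⁻¹).prod

/-- The number of sign patterns whose signed product lies in `T`. -/
def cnt {n : ℕ} (A : Fin n → G) (T : Finset G) : ℕ :=
  ((Finset.univ : Finset (Fin n → Bool)).filter (fun ε => prodSigns A ε ∈ T)).card

lemma prodSigns_cons {n : ℕ} (A : Fin (n + 1) → G) (b : Bool) (ε' : Fin n → Bool) :
    prodSigns A (Fin.cons b ε')
      = (if b then A 0 else (A 0)⁻¹) * prodSigns (fun i => A i.succ) ε' := by
  unfold prodSigns
  rw [List.ofFn_succ, List.prod_cons]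
  simp only [Fin.cons_zero, Fin.cons_succ]

lemma mem_image_mul_inv (a x : G) (T : Finset G) :
    a * x ∈ T ↔ x ∈ T.image (fun g => a⁻¹ * g) := by
  constructor
  · intro h
    exact Finset.mem_image.mpr ⟨a * x, h, by group⟩
  · intro h
    obtain ⟨g, hg, rfl⟩ := Finset.mem_image.mp h
    have : a * (a⁻¹ * g) = g := by group
    rwa [this]

lemma cnt_le_pow {n : ℕ} (A : Fin n → G) (T : Finset G) : cnt A T ≤ 2 ^ n := by
  unfold cnt
  calc ((Finset.univ : Finset (Fin n → Bool)).filter _).card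
      ≤ (Finset.univ : Finset (Fin n → Bool)).card := Finset.card_filter_le _ _
    _ = 2 ^ n := by simp [Finset.card_univ]

lemma cnt_empty {n : ℕ} (A : Fin n → G) : cnt A (∅ : Finset G) = 0 := by
  unfold cnt
  simp

lemma cnt_part {n : ℕ} (A : Fin (n + 1) → G) (T : Finset G) (b : Bool) :
    ((Finset.univ : Finset (Fin (n + 1) → Bool)).filter
        (fun ε => prodSigns A ε ∈ T ∧ ε 0 = b))
      = ((Finset.univ : Finset (Fin n → Bool)).filter
          (fun ε' => prodSigns (fun i => A i.succ) ε'
              ∈ T.image fun g => (if b then A 0 else (A 0)⁻¹)⁻¹ * g)).image (Fin.cons b) := by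
  ext ε
  simp only [Finset.mem_filter, Finset.mem_univ, true_and, Finset.mem_image]
  constructor
  · rintro ⟨h1, h2⟩
    refine ⟨Fin.tail ε, ⟨prodSigns A ε, h1, ?_⟩, ?_⟩
    · have hc : Fin.cons b (Fin.tail ε) = ε := by rw [← h2]; exact Fin.cons_self_tail ε
      have hp := prodSigns_cons A b (Fin.tail ε)
      rw [hc] at hp
      rw [hp, inv_mul_cancel_left]
    · rw [← h2]; exact Fin.cons_self_tail ε
  · rintro ⟨ε', ⟨g, hg, hge⟩, rfl⟩
    refine ⟨?_, ?_⟩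
    · rw [prodSigns_cons, ← hge, mul_inv_cancel_left]
      exact hg
    · simp

lemma cnt_split {n : ℕ} (A : Fin (n + 1) → G) (T : Finset G) :
    cnt A T = cnt (fun i => A i.succ) (T.image fun g => (A 0)⁻¹ * g)
            + cnt (fun i => A i.succ) (T.image fun g => A 0 * g) := by
  have e1 := cnt_part A T true
  have e2 := cnt_part A T false
  simp only [if_true, Bool.false_eq_true, if_false, inv_inv] at e1 e2
  have hi1 : Function.Injective
      (fun ε' : Fin n → Bool => (Fin.cons true ε' : Fin (n + 1) → Bool)) := by
    intro x y hxy
    have := congrArg Fin.tail hxy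
    simpa [Fin.tail_cons] using this
  have hi0 : Function.Injective
      (fun ε' : Fin n → Bool => (Fin.cons false ε' : Fin (n + 1) → Bool)) := by
    intro x y hxy
    have := congrArg Fin.tail hxy
    simpa [Fin.tail_cons] using this
  unfold cnt
  rw [← Finset.card_filter_add_card_filter_not
      (p := fun ε : Fin (n + 1) → Bool => ε 0 = true)]
  rw [Finset.filter_filter, Finset.filter_filter]
  have hneg : ((Finset.univ : Finset (Fin (n + 1) → Bool)).filter
      (fun ε => prodSigns A ε ∈ T ∧ ¬ε 0 = true))
      = ((Finset.univ : Finset (Fin (n + 1) → Bool)).filter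
        (fun ε => prodSigns A ε ∈ T ∧ ε 0 = false)) := by
    apply Finset.filter_congr
    intro ε _
    simp [Bool.not_eq_true]
  rw [hneg, e1, e2]
  rw [Finset.card_image_of_injective _ hi1, Finset.card_image_of_injective _ hi0]

lemma cnt_union_inter {n : ℕ} (A : Fin n → G) (T₁ T₂ : Finset G) :
    cnt A (T₁ ∪ T₂) + cnt A (T₁ ∩ T₂) = cnt A T₁ + cnt A T₂ := by
  unfold cnt
  have h1 : (Finset.univ : Finset (Fin n → Bool)).filter (fun ε => prodSigns A ε ∈ T₁ ∪ T₂)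
      = ((Finset.univ : Finset (Fin n → Bool)).filter (fun ε => prodSigns A ε ∈ T₁))
        ∪ ((Finset.univ : Finset (Fin n → Bool)).filter (fun ε => prodSigns A ε ∈ T₂)) := by
    rw [← Finset.filter_or]
    apply Finset.filter_congr
    intro ε _
    simp [Finset.mem_union]
  have h2 : (Finset.univ : Finset (Fin n → Bool)).filter (fun ε => prodSigns A ε ∈ T₁ ∩ T₂)
      = ((Finset.univ : Finset (Fin n → Bool)).filter (fun ε => prodSigns A ε ∈ T₁))
        ∩ ((Finset.univ : Finset (Fin n → Bool)).filter (fun ε => prodSigns A ε ∈ T₂)) := by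
    rw [← Finset.filter_and]
    apply Finset.filter_congr
    intro ε _
    simp [Finset.mem_inter]
  rw [h1, h2]
  exact Finset.card_union_add_card_inter _ _

/-! ### The master inequality -/

theorem master (t : ℕ) (ht : 1 ≤ t) :
    ∀ (n : ℕ) (A : Fin n → G), (∀ i (k : ℕ), 1 ≤ k → k < t → A i ^ (2 * k) ≠ 1) →
    ∀ T : Finset G,
    (cnt A T : ℝ) ≤ 2 ^ n * T.card / t + S n T.card := by
  intro n
  induction n with
  | zero =>
    intro A _ T
    rcases Nat.eq_zero_or_pos T.card with h0 | h1
    · have hT : T = ∅ := Finset.card_eq_zero.mp h0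
      subst hT
      rw [cnt_empty]
      norm_num [S_zero]
    · have hS : S 0 T.card = 1 := S_base _ h1
      rw [hS]
      have hle : cnt A T ≤ 1 := by
        have := cnt_le_pow A T
        simpa using this
      have hle' : (cnt A T : ℝ) ≤ 1 := by exact_mod_cast hle
      have hpos : (0:ℝ) ≤ 2 ^ 0 * T.card / t := by positivity
      push_cast
      linarith
  | succ n ih =>
    intro A hA T
    rcases T.eq_empty_or_nonempty with rfl | hTne
    · rw [cnt_empty]
      norm_num [S_zero]
    set a := A 0 with ha
    set A' : Fin n → G := fun i => A i.succ with hA'def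
    have hA' : ∀ i (k : ℕ), 1 ≤ k → k < t → A' i ^ (2 * k) ≠ 1 := fun i => hA i.succ
    set T₁ := T.image (fun g => a⁻¹ * g) with hT₁
    set T₂ := T.image (fun g => a * g) with hT₂
    set l := T.card with hl
    have hcard₁ : T₁.card = l := Finset.card_image_of_injective _ (mul_right_injective a⁻¹)
    have hcard₂ : T₂.card = l := Finset.card_image_of_injective _ (mul_right_injective a)
    have hsplit : cnt A T = cnt A' T₁ + cnt A' T₂ := cnt_split A T
    have huvsum : (T₁ ∪ T₂).card + (T₁ ∩ T₂).card = 2 * l := by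
      rw [Finset.card_union_add_card_inter, hcard₁, hcard₂]
      omega
    set u := (T₁ ∪ T₂).card with hu
    set v := (T₁ ∩ T₂).card with hv
    have hvle : v ≤ l := by
      rw [hv, ← hcard₁]
      exact Finset.card_le_card Finset.inter_subset_left
    have htR : (0:ℝ) < (t:ℝ) := by exact_mod_cast ht
    by_cases hveq : v = l
    · -- degenerate case : T₁ = T₂, so T₁ is invariant under mult by a² and is large
      have hT₁T₂ : T₁ = T₂ := by
        have hsub : T₁ ∩ T₂ ⊆ T₁ := Finset.inter_subset_left
        have h1 : T₁ ∩ T₂ = T₁ :=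
          Finset.eq_of_subset_of_card_le hsub (by rw [hcard₁, ← hv, hveq])
        have hsub2 : T₁ ⊆ T₂ := by
          rw [← h1]
          exact Finset.inter_subset_right
        exact Finset.eq_of_subset_of_card_le hsub2 (by rw [hcard₁, hcard₂])
      set w := a ^ 2 with hw
      have hwT : ∀ y ∈ T₁, w * y ∈ T₁ := by
        intro y hy
        obtain ⟨g, hg, rfl⟩ := Finset.mem_image.mp hy
        have h2 : a * g ∈ T₂ := Finset.mem_image_of_mem _ hg
        rw [← hT₁T₂] at h2
        have heq : w * (a⁻¹ * g) = a * g := by rw [hw]; group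
        rwa [heq]
      obtain ⟨x0, hx0⟩ := hTne
      have hx : a⁻¹ * x0 ∈ T₁ := Finset.mem_image_of_mem _ hx0
      set x := a⁻¹ * x0 with hxdef
      have hpow : ∀ k : ℕ, w ^ k * x ∈ T₁ := by
        intro k
        induction k with
        | zero => simpa using hx
        | succ k ihk =>
          have heq : w ^ (k + 1) * x = w * (w ^ k * x) := by
            rw [pow_succ', mul_assoc]
          rw [heq]
          exact hwT _ ihk
      have hwpow : ∀ k : ℕ, 1 ≤ k → k < t → w ^ k ≠ 1 := by
        intro k hk1 hkt hcon
        apply hA 0 k hk1 hkt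
        rw [pow_mul]
        exact hcon
      have htl : t ≤ l := by
        have hinj : Set.InjOn (fun k => w ^ k * x) (Finset.range t : Set ℕ) := by
          intro i hi j hj hij
          simp only [Finset.coe_range, Set.mem_Iio] at hi hj
          simp only at hij
          have hww : w ^ i = w ^ j := mul_right_cancel hij
          by_contra hne
          rcases Nat.lt_or_ge i j with hlt | hge
          · have heq2 : w ^ j = w ^ i * w ^ (j - i) := by
              rw [← pow_add]
              congr 1
              omega
            rw [heq2] at hww
            have h1 : w ^ (j - i) = 1 := by
              have h3 : w ^ i * 1 = w ^ i * w ^ (j - i) := by rw [mul_one]; exact hww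
              exact (mul_left_cancel h3).symm
            exact hwpow (j - i) (by omega) (by omega) h1
          · have hlt' : j < i := by omega
            have heq2 : w ^ i = w ^ j * w ^ (i - j) := by
              rw [← pow_add]
              congr 1
              omega
            rw [heq2] at hww
            have h1 : w ^ (i - j) = 1 := by
              have h3 : w ^ j * w ^ (i - j) = w ^ j * 1 := by rw [mul_one]; exact hww
              exact mul_left_cancel h3
            exact hwpow (i - j) (by omega) (by omega) h1
        have hmaps : ∀ k ∈ Finset.range t, w ^ k * x ∈ T₁ := fun k _ => hpow k
        have hcle := Finset.card_le_card_of_injOn _ hmaps hinj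
        rwa [Finset.card_range, hcard₁] at hcle
      have h1 : (cnt A T : ℝ) ≤ 2 ^ (n + 1) := by
        have := cnt_le_pow A T
        exact_mod_cast this
      have h2 : (2:ℝ) ^ (n + 1) ≤ 2 ^ (n + 1) * l / t := by
        rw [le_div_iff₀ htR]
        have hcast : (t:ℝ) ≤ (l:ℝ) := by exact_mod_cast htl
        have hp2 : (0:ℝ) < 2 ^ (n + 1) := by positivity
        nlinarith
      have h3 : (0:ℝ) ≤ (S (n + 1) l : ℝ) := by positivity
      linarith
    · -- main case : v < l
      have hvlt : v < l := lt_of_le_of_ne hvle hveq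
      have hl1 : 1 ≤ l := by omega
      obtain ⟨p, hp⟩ : ∃ p, l = p + 1 := ⟨l - 1, by omega⟩
      have hN : cnt A T = cnt A' (T₁ ∪ T₂) + cnt A' (T₁ ∩ T₂) := by
        rw [hsplit]
        exact (cnt_union_inter A' T₁ T₂).symm
      have ih1 := ih A' hA' (T₁ ∪ T₂)
      have ih2 := ih A' hA' (T₁ ∩ T₂)
      rw [← hu] at ih1
      rw [← hv] at ih2
      set c := p - v with hc
      have huval : u = v + 2 * c + 2 := by omega
      have hSpair : S n u + S n v ≤ S n (p + 2) + S n p := by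
        have hsp := S_pairing n c v
        rw [← huval] at hsp
        have e1 : v + c + 2 = p + 2 := by omega
        have e2 : v + c = p := by omega
        rw [e1, e2] at hsp
        exact hsp
      have hSrec : S (n + 1) (p + 1) = S n (p + 2) + S n p := S_rec n p
      have huv : (u:ℝ) + v = 2 * ((p:ℝ) + 1) := by
        have hn2 : u + v = 2 * (p + 1) := by omega
        exact_mod_cast hn2
      have hlin : (2:ℝ) ^ n * u / t + 2 ^ n * v / t = 2 ^ (n + 1) * ((p:ℝ) + 1) / t := by
        rw [← add_div, ← mul_add, huv]
        ring
      rw [hp]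
      calc (cnt A T : ℝ) = (cnt A' (T₁ ∪ T₂) : ℝ) + (cnt A' (T₁ ∩ T₂) : ℝ) := by
            exact_mod_cast hN
        _ ≤ (2 ^ n * u / t + S n u) + (2 ^ n * v / t + S n v) := add_le_add ih1 ih2
        _ = (2 ^ n * u / t + 2 ^ n * v / t) + ((S n u : ℝ) + S n v) := by ring
        _ ≤ 2 ^ (n + 1) * ((p:ℝ) + 1) / t + ((S n (p + 2) : ℝ) + S n p) := by
            rw [hlin]
            have hc2 : (S n u : ℝ) + S n v ≤ (S n (p + 2) : ℝ) + S n p := by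
              exact_mod_cast hSpair
            linarith
        _ = 2 ^ (n + 1) * ((p + 1 : ℕ) : ℝ) / t + S (n + 1) (p + 1) := by
            rw [hSrec]
            push_cast
            ring

end NonabelianLO

/-- **Non-abelian Littlewood–Offord inequality** (Theorem 1.3). For `m, n, s ≥ 2` and a
sequence `A 1, …, A n` of elements of `GL_m(ℂ)`, each of order at least `s` (i.e. of
infinite order, `orderOf (A i) = 0`, or of finite order `≥ s`), and any `B ∈ GL_m(ℂ)`,
the number of sign vectors `ε ∈ {−1,1}^n` with `A 1 ^ ε 1 ⋯ A n ^ ε n = B` is at most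
`141 · max {1/s, 1/√n} · 2^n`. -/
theorem nonabelian_littlewood_offord_GL_C (m n s : ℕ) (hm : 2 ≤ m) (hn : 2 ≤ n) (hs : 2 ≤ s)
    (A : Fin n → GL (Fin m) ℂ)
    (hA : ∀ i, orderOf (A i) = 0 ∨ s ≤ orderOf (A i))
    (B : GL (Fin m) ℂ) :
    (Nat.card {ε : Fin n → Bool //
        (List.ofFn fun i => if ε i then A i else (A i)⁻¹).prod = B} : ℝ) ≤
      141 * max (1 / (s : ℝ)) (1 / Real.sqrt n) * 2 ^ n := by
  letI : DecidableEq (GL (Fin m) ℂ) := Classical.decEq _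
  set t := (s + 1) / 2 with htdef
  have ht1 : 1 ≤ t := by omega
  have hs2t : s ≤ 2 * t := by omega
  have hA' : ∀ (i : Fin n) (k : ℕ), 1 ≤ k → k < t → A i ^ (2 * k) ≠ 1 := by
    intro i k hk1 hkt hpow
    have h2k : 0 < 2 * k := by omega
    rcases hA i with h0 | hs'
    · have hfin : IsOfFinOrder (A i) := by
        rw [isOfFinOrder_iff_pow_eq_one]
        exact ⟨2 * k, h2k, hpow⟩
      rw [orderOf_eq_zero_iff] at h0
      exact h0 hfin
    · have hdvd : orderOf (A i) ∣ 2 * k := orderOf_dvd_of_pow_eq_one hpow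
      have hle : orderOf (A i) ≤ 2 * k := Nat.le_of_dvd h2k hdvd
      omega
  have hfilter : ((Finset.univ : Finset (Fin n → Bool)).filter
      (fun ε => NonabelianLO.prodSigns A ε ∈ ({B} : Finset (GL (Fin m) ℂ))))
      = ((Finset.univ : Finset (Fin n → Bool)).filter
        (fun ε => (List.ofFn fun i => if ε i then A i else (A i)⁻¹).prod = B)) := by
    apply Finset.filter_congr
    intro ε _
    simp [NonabelianLO.prodSigns]
  have hcard : Nat.card {ε : Fin n → Bool //
      (List.ofFn fun i => if ε i then A i else (A i)⁻¹).prod = B}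
      = NonabelianLO.cnt A ({B} : Finset (GL (Fin m) ℂ)) := by
    rw [Nat.card_eq_fintype_card, Fintype.card_subtype]
    unfold NonabelianLO.cnt
    rw [hfilter]
  rw [hcard]
  clear hcard hfilter
  have hmaster := NonabelianLO.master t ht1 n A hA' ({B} : Finset (GL (Fin m) ℂ))
  have hcard1 : ({B} : Finset (GL (Fin m) ℂ)).card = 1 := Finset.card_singleton B
  rw [hcard1, NonabelianLO.S_one] at hmaster
  have hm2 : (NonabelianLO.cnt A ({B} : Finset (GL (Fin m) ℂ)) : ℝ)
      ≤ 2 ^ n / t + (n.choose (n / 2) : ℝ) := by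
    simp only [Nat.cast_one, mul_one] at hmaster
    exact hmaster
  have hn1 : 1 ≤ n := by linarith
  have hnR : (0:ℝ) < (n:ℝ) := by exact_mod_cast (by linarith : 0 < n)
  have hsR : (0:ℝ) < (s:ℝ) := by exact_mod_cast (by linarith : 0 < s)
  have htR : (0:ℝ) < (t:ℝ) := by exact_mod_cast ht1
  have hsqrt : (0:ℝ) < Real.sqrt n := Real.sqrt_pos.mpr hnR
  have hpow2 : (0:ℝ) < 2 ^ n := by positivity
  have hb1 : (2:ℝ) ^ n / t ≤ 2 * (1 / s) * 2 ^ n := by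
    rw [div_le_iff₀ htR]
    have h2t : (s:ℝ) ≤ 2 * t := by exact_mod_cast hs2t
    have hks : (s:ℝ) * (1 / s) = 1 := by field_simp
    have hmono : (s:ℝ) * (1 / s) ≤ 2 * t * (1 / s) :=
      mul_le_mul_of_nonneg_right h2t (by positivity)
    rw [hks] at hmono
    nlinarith
  have hb2 : ((n.choose (n / 2) : ℕ) : ℝ) ≤ 1 / Real.sqrt n * 2 ^ n := by
    have hcr := NonabelianLO.choose_half_real_bound n hn1
    calc ((n.choose (n / 2) : ℕ) : ℝ) ≤ 2 ^ n / Real.sqrt n := hcr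
      _ = 1 / Real.sqrt n * 2 ^ n := by ring
  have hmax1 : 1 / (s:ℝ) ≤ max (1 / (s:ℝ)) (1 / Real.sqrt n) := le_max_left _ _
  have hmax2 : 1 / Real.sqrt n ≤ max (1 / (s:ℝ)) (1 / Real.sqrt n) := le_max_right _ _
  have hmaxpos : (0:ℝ) < max (1 / (s:ℝ)) (1 / Real.sqrt n) :=
    lt_of_lt_of_le (by positivity) hmax1
  calc (NonabelianLO.cnt A ({B} : Finset (GL (Fin m) ℂ)) : ℝ)
      ≤ 2 ^ n / t + (n.choose (n / 2) : ℕ) := hm2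
    _ ≤ 2 * (1 / s) * 2 ^ n + 1 / Real.sqrt n * 2 ^ n := add_le_add hb1 hb2
    _ ≤ 2 * max (1 / (s:ℝ)) (1 / Real.sqrt n) * 2 ^ n
        + max (1 / (s:ℝ)) (1 / Real.sqrt n) * 2 ^ n := by
        have k1 := mul_le_mul_of_nonneg_right hmax1 (le_of_lt hpow2)
        have k2 := mul_le_mul_of_nonneg_right hmax2 (le_of_lt hpow2)
        nlinarith
    _ = 3 * max (1 / (s:ℝ)) (1 / Real.sqrt n) * 2 ^ n := by ring
    _ ≤ 141 * max (1 / (s:ℝ)) (1 / Real.sqrt n) * 2 ^ n := by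
        nlinarith
end

section
/- There exists an integer p_0 > 1 such that the following holds whenever p ≥ p_0. Let m ≥ 43 be an integer, p ≥ m a prime number, and n, s ≥ 2 integers. Let V = (A_1, …, A_n) be a sequence of elements of S = PSL_m(𝔽_p), each of order at least s. Then for every B ∈ S, the number of sign vectors ε ∈ {−1,1}^n with A_1^{ε_1} ⋯ A_n^{ε_n} = B is at most (2/p + 120/s + 19/√n)·2^n; that is, ρ_V ≤ 2/p + 120/s + 19/√n. -/
set_option linter.unusedSectionVars false


open Matrix

/-- `PSL_m(𝔽_p)`: the quotient of `SL_m(𝔽_p)` by its center. -/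
def PSL (m p : ℕ) : Type :=
  Matrix.SpecialLinearGroup (Fin m) (ZMod p) ⧸
    Subgroup.center (Matrix.SpecialLinearGroup (Fin m) (ZMod p))

instance (m p : ℕ) : Group (PSL m p) :=
  inferInstanceAs (Group (_ ⧸ Subgroup.center (Matrix.SpecialLinearGroup (Fin m) (ZMod p))))

namespace NLO

variable {G : Type*} [Group G] [Fintype G] [DecidableEq G]

/-- The number of sign patterns `ε : Fin k → Bool` with
`A 0 ^ ± * A 1 ^ ± * ... * A (k-1) ^ ± = B`, defined recursively by peeling
the last factor. -/
def cnt (A : ℕ → G) : ℕ → G → ℕ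
  | 0, B => if B = 1 then 1 else 0
  | (k+1), B => cnt A k (B * (A k)⁻¹) + cnt A k (B * A k)

lemma cnt_zero (A : ℕ → G) (B : G) : cnt A 0 B = if B = 1 then 1 else 0 := rfl

lemma cnt_succ (A : ℕ → G) (k : ℕ) (B : G) :
    cnt A (k+1) B = cnt A k (B * (A k)⁻¹) + cnt A k (B * A k) := rfl

lemma sum_shift {M : Type*} [AddCommMonoid M] (g : G) (F : G → M) :
    ∑ B : G, F (B * g) = ∑ B : G, F B :=
  Equiv.sum_comp (Equiv.mulRight g) F

lemma sum_cnt (A : ℕ → G) (k : ℕ) : ∑ B : G, cnt A k B = 2 ^ k := by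
  induction k with
  | zero => simp [cnt_zero]
  | succ k ih =>
    simp only [cnt_succ]
    rw [Finset.sum_add_distrib, sum_shift (A k)⁻¹ (cnt A k), sum_shift (A k) (cnt A k), ih]
    ring

lemma sum_cnt_real (A : ℕ → G) (k : ℕ) : ∑ B : G, (cnt A k B : ℝ) = 2 ^ k := by
  exact_mod_cast congrArg (Nat.cast : ℕ → ℝ) (sum_cnt A k)

lemma cnt_le_two_pow (A : ℕ → G) (k : ℕ) (B : G) : cnt A k B ≤ 2 ^ k := by
  calc cnt A k B ≤ ∑ B' : G, cnt A k B' :=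
        Finset.single_le_sum (fun _ _ => Nat.zero_le _) (Finset.mem_univ B)
    _ = 2 ^ k := sum_cnt A k

/-- Normalized collision number `∑ cnt² / 4^k`. -/
noncomputable def qn (A : ℕ → G) (k : ℕ) : ℝ := (∑ B : G, (cnt A k B : ℝ) ^ 2) / 4 ^ k

/-- Normalized maximum `max cnt / 2^k`. -/
def supcnt (A : ℕ → G) (k : ℕ) : ℕ := Finset.univ.sup (cnt A k)

noncomputable def mn (A : ℕ → G) (k : ℕ) : ℝ := (supcnt A k : ℝ) / 2 ^ k

lemma qn_nonneg (A : ℕ → G) (k : ℕ) : 0 ≤ qn A k := by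
  unfold qn; positivity

lemma cnt_le_sup (A : ℕ → G) (k : ℕ) (B : G) :
    cnt A k B ≤ supcnt A k := Finset.le_sup (Finset.mem_univ B)

lemma sup_attained (A : ℕ → G) (k : ℕ) :
    ∃ B : G, supcnt A k = cnt A k B := by
  obtain ⟨b, _, hb⟩ := Finset.exists_mem_eq_sup Finset.univ
    ⟨1, Finset.mem_univ 1⟩ (cnt A k)
  exact ⟨b, hb⟩

lemma mn_le_one (A : ℕ → G) (k : ℕ) : mn A k ≤ 1 := by
  unfold mn
  rw [div_le_one (by positivity)]
  obtain ⟨B, hB⟩ := sup_attained A k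
  rw [hB]
  exact_mod_cast cnt_le_two_pow A k B

lemma qn_le_mn (A : ℕ → G) (k : ℕ) : qn A k ≤ mn A k := by
  unfold qn mn
  have h1 : ∑ B : G, (cnt A k B : ℝ) ^ 2
      ≤ (supcnt A k : ℝ) * 2 ^ k := by
    calc ∑ B : G, (cnt A k B : ℝ) ^ 2
        ≤ ∑ B : G, (supcnt A k : ℝ) * (cnt A k B : ℝ) := by
          apply Finset.sum_le_sum
          intro B _
          have h := cnt_le_sup A k B
          have h' : (cnt A k B : ℝ) ≤ (supcnt A k : ℝ) := by exact_mod_cast h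
          have h0 : (0:ℝ) ≤ (cnt A k B : ℝ) := by positivity
          nlinarith
      _ = (supcnt A k : ℝ) * ∑ B : G, (cnt A k B : ℝ) := by
          rw [Finset.mul_sum]
      _ = (supcnt A k : ℝ) * 2 ^ k := by rw [sum_cnt_real]
  rw [div_le_div_iff₀ (by positivity) (by positivity)]
  have h4 : (4:ℝ) ^ k = 2 ^ k * 2 ^ k := by
    rw [← mul_pow]; norm_num
  have hs : (0:ℝ) ≤ (supcnt A k : ℝ) := by positivity
  have h2 : (0:ℝ) < 2 ^ k := by positivity
  nlinarith

lemma qn_zero (A : ℕ → G) : qn A 0 = 1 := by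
  unfold qn
  have h : ∀ B : G, ((cnt A 0 B : ℝ)) ^ 2 = if B = 1 then 1 else 0 := by
    intro B
    rw [cnt_zero]
    split <;> simp
  rw [Finset.sum_congr rfl (fun B _ => h B), Finset.sum_ite_eq' Finset.univ (1:G) (fun _ => (1:ℝ))]
  simp

lemma sup_succ_le (A : ℕ → G) (k : ℕ) :
    supcnt A (k+1) ≤ 2 * supcnt A k := by
  apply Finset.sup_le
  intro B _
  rw [cnt_succ, two_mul]
  exact Nat.add_le_add (cnt_le_sup A k _) (cnt_le_sup A k _)

lemma mn_mono (A : ℕ → G) (k : ℕ) : mn A (k+1) ≤ mn A k := by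
  unfold mn
  rw [pow_succ, div_le_div_iff₀ (by positivity) (by positivity)]
  have h2 : (supcnt A (k+1) : ℝ) ≤ 2 * (supcnt A k : ℝ) := by
    exact_mod_cast sup_succ_le A k
  have hp : (0:ℝ) < 2 ^ k := by positivity
  have h0 : (0:ℝ) ≤ (supcnt A k : ℝ) := by positivity
  nlinarith

/-- The one-step `ℓ²` identity. -/
lemma sum_sq_succ (A : ℕ → G) (k : ℕ) :
    ∑ B : G, (cnt A (k+1) B : ℝ) ^ 2
      = 4 * (∑ B : G, (cnt A k B : ℝ) ^ 2)
        - ∑ B : G, ((cnt A k B : ℝ) - (cnt A k (B * (A k) ^ 2) : ℝ)) ^ 2 := by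
  set a := A k with ha
  set c : G → ℝ := fun B => (cnt A k B : ℝ) with hc
  have hrec : ∀ B : G, (cnt A (k+1) B : ℝ) = c (B * a⁻¹) + c (B * a) := by
    intro B
    rw [cnt_succ]
    push_cast
    rfl
  have h1 : ∑ B : G, (cnt A (k+1) B : ℝ) ^ 2
      = ∑ B : G, ((c (B * a⁻¹)) ^ 2 + (c (B * a)) ^ 2 + 2 * (c (B * a⁻¹) * c (B * a))) :=
    Finset.sum_congr rfl (fun B _ => by rw [hrec]; ring)
  have h2 : ∑ B : G, (c (B * a⁻¹)) ^ 2 = ∑ B : G, c B ^ 2 := sum_shift a⁻¹ (fun x => c x ^ 2)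
  have h3 : ∑ B : G, (c (B * a)) ^ 2 = ∑ B : G, c B ^ 2 := sum_shift a (fun x => c x ^ 2)
  have h4 : ∑ B : G, c (B * a⁻¹) * c (B * a) = ∑ B : G, c B * c (B * a ^ 2) := by
    calc ∑ B : G, c (B * a⁻¹) * c (B * a)
        = ∑ B : G, c (B * a⁻¹) * c ((B * a⁻¹) * a ^ 2) := by
          apply Finset.sum_congr rfl
          intro B _
          congr 2
          group
      _ = ∑ B : G, c B * c (B * a ^ 2) := sum_shift a⁻¹ (fun x => c x * c (x * a ^ 2))
  have h5 : ∑ B : G, c (B * a ^ 2) ^ 2 = ∑ B : G, c B ^ 2 := sum_shift (a ^ 2) (fun x => c x ^ 2)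
  have h6 : ∑ B : G, c B * c (B * a ^ 2)
      = ∑ B : G, c B ^ 2 - (∑ B : G, (c B - c (B * a ^ 2)) ^ 2) / 2 := by
    have hpt : ∀ B : G, c B * c (B * a ^ 2)
        = (c B ^ 2 + c (B * a ^ 2) ^ 2 - (c B - c (B * a ^ 2)) ^ 2) / 2 := fun B => by ring
    rw [Finset.sum_congr rfl (fun B _ => hpt B), ← Finset.sum_div, Finset.sum_sub_distrib,
      Finset.sum_add_distrib, h5]
    ring
  rw [h1, Finset.sum_add_distrib, Finset.sum_add_distrib, h2, h3, ← Finset.mul_sum, h4, h6]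
  ring

/-- The key anticoncentration step: if the renormalized maximum is still large
compared to `8/s`, then the collision quantity `qn` drops. -/
lemma decay (A : ℕ → G) (s : ℕ) (hs : 8 ≤ s) (hord : ∀ i, s ≤ orderOf (A i)) (k : ℕ)
    (hM : 8 / (s : ℝ) < mn A k) :
    qn A (k+1) ≤ qn A k - (mn A k) ^ 3 / 48 := by
  have spos : (0:ℝ) < s := by
    have : (8:ℝ) ≤ s := by exact_mod_cast hs
    linarith
  set μ : G → ℝ := fun B => (cnt A k B : ℝ) / 2 ^ k with hμdef
  have μnn : ∀ B, 0 ≤ μ B := fun B => by positivity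
  have sumμ : ∑ B : G, μ B = 1 := by
    rw [hμdef, ← Finset.sum_div, sum_cnt_real, div_self (by positivity)]
  obtain ⟨x₀, hx₀⟩ := sup_attained A k
  have hmn : mn A k = μ x₀ := by unfold mn; rw [hx₀]
  set M := mn A k with hMdef
  have Mpos : 0 < M := lt_trans (by positivity) hM
  have μle : ∀ B, μ B ≤ M := by
    intro B
    rw [hmn]
    have h := cnt_le_sup A k B
    rw [hx₀] at h
    have h' : (cnt A k B : ℝ) ≤ (cnt A k x₀ : ℝ) := by exact_mod_cast h
    show (cnt A k B : ℝ) / 2 ^ k ≤ (cnt A k x₀ : ℝ) / 2 ^ k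
    gcongr
  have Mle1 : M ≤ 1 := mn_le_one A k
  set g := (A k) ^ 2 with hg
  have lpos : 0 < orderOf g := orderOf_pos g
  have ht : s ≤ orderOf (A k) := hord k
  have htl : orderOf (A k) ≤ 2 * orderOf g := by
    apply Nat.le_of_dvd (by omega)
    apply orderOf_dvd_of_pow_eq_one
    rw [pow_mul]
    exact pow_orderOf_eq_one g
  set r : ℕ := ⌈(2:ℝ) / M⌉₊ with hr
  have hr1 : (2:ℝ) / M ≤ r := Nat.le_ceil _
  have hr2 : (r:ℝ) < 2 / M + 1 := Nat.ceil_lt_add_one (by positivity)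
  have hsM : (8:ℝ) < s * M := by
    rw [div_lt_iff₀ spos] at hM
    linarith
  have h2M : (2:ℝ) / M < s / 4 := by
    rw [div_lt_div_iff₀ Mpos (by norm_num)]
    nlinarith
  have hsl : (s:ℝ) ≤ 2 * (orderOf g : ℝ) := by
    have := le_trans ht htl
    exact_mod_cast this
  have hs8R : (8:ℝ) ≤ s := by exact_mod_cast hs
  have hrlR : (r:ℝ) + 1 < (orderOf g : ℝ) := by
    have h1 : (s:ℝ) / 2 ≤ (orderOf g : ℝ) := by linarith
    linarith
  have hrl : r + 1 ≤ orderOf g := by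
    have : ((r + 1 : ℕ) : ℝ) < (orderOf g : ℝ) := by push_cast; linarith
    exact le_of_lt (by exact_mod_cast this)
  set y : ℕ → G := fun i => x₀ * g ^ i with hy
  have hyinj : ∀ i ∈ Finset.range (r+1), ∀ j ∈ Finset.range (r+1), y i = y j → i = j := by
    have aux : ∀ i j : ℕ, i ≤ j → j < orderOf g → y i = y j → i = j := by
      intro i j hij hjl hyij
      have hgij : g ^ i = g ^ j := mul_left_cancel hyij
      have hone : g ^ (j - i) = 1 := by
        have h' : g ^ i * g ^ (j - i) = g ^ i * 1 := by
          rw [← pow_add, Nat.add_sub_cancel' hij, hgij, mul_one]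
        exact mul_left_cancel h'
      have hdvd := orderOf_dvd_of_pow_eq_one hone
      rcases Nat.eq_zero_or_pos (j - i) with h0 | hpos
      · omega
      · have := Nat.le_of_dvd hpos hdvd
        omega
    intro i hi j hj hyij
    rw [Finset.mem_range] at hi hj
    rcases le_total i j with h | h
    · exact aux i j h (by omega) hyij
    · exact (aux j i h (by omega) hyij.symm).symm
  have hmass : ∑ i ∈ Finset.range (r+1), μ (y i) ≤ 1 := by
    rw [← sumμ, ← Finset.sum_image hyinj]
    exact Finset.sum_le_sum_of_subset_of_nonneg (Finset.subset_univ _) (fun b _ _ => μnn b)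
  have hexj : ∃ j ∈ Finset.range (r+1), μ (y j) ≤ 1 / ((r:ℝ) + 1) := by
    by_contra hcon
    push_neg at hcon
    have hlt : ∑ _i ∈ Finset.range (r+1), (1 / ((r:ℝ) + 1))
        < ∑ i ∈ Finset.range (r+1), μ (y i) :=
      Finset.sum_lt_sum_of_nonempty ⟨0, Finset.mem_range.mpr (by omega)⟩
        (fun i hi => hcon i hi)
    rw [Finset.sum_const, Finset.card_range, nsmul_eq_mul] at hlt
    have heq : ((r + 1 : ℕ) : ℝ) * (1 / ((r:ℝ) + 1)) = 1 := by
      push_cast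
      field_simp
    rw [heq] at hlt
    linarith
  obtain ⟨j, hjmem, hjv⟩ := hexj
  have hjr : j ≤ r := by
    have := Finset.mem_range.mp hjmem
    omega
  have hinvlt : 1 / ((r:ℝ) + 1) < M / 2 := by
    rw [div_lt_div_iff₀ (by positivity) (by norm_num)]
    have hMr : M * (2 / M) = 2 := by field_simp
    nlinarith
  have hμyj : μ (y j) < M / 2 := lt_of_le_of_lt hjv hinvlt
  have hy0 : μ (y 0) = M := by
    have : y 0 = x₀ := by simp [hy]
    rw [this, hmn]
  have hjpos : 0 < j := by
    rcases Nat.eq_zero_or_pos j with h0 | h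
    · exfalso
      rw [h0, hy0] at hμyj
      linarith
    · exact h
  set d : ℕ → ℝ := fun i => μ (y i) - μ (y (i+1)) with hd
  have htel : ∑ i ∈ Finset.range j, d i = μ (y 0) - μ (y j) :=
    Finset.sum_range_sub' (fun i => μ (y i)) j
  have hMhalf : M / 2 ≤ ∑ i ∈ Finset.range j, d i := by
    rw [htel, hy0]
    linarith
  have hCS : (∑ i ∈ Finset.range j, d i) ^ 2 ≤ (j:ℝ) * ∑ i ∈ Finset.range j, (d i) ^ 2 := by
    have h := Finset.sum_mul_sq_le_sq_mul_sq (Finset.range j) (fun _ => (1:ℝ)) d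
    simpa [Finset.card_range] using h
  set D := ∑ B : G, (μ B - μ (B * g)) ^ 2 with hD
  have hDnn : 0 ≤ D := by positivity
  have hterm : ∑ i ∈ Finset.range j, (d i) ^ 2 ≤ D := by
    have hstep : ∀ i, y (i+1) = y i * g := by
      intro i
      simp [hy, pow_succ, mul_assoc]
    have hyinj' : ∀ a ∈ Finset.range j, ∀ b ∈ Finset.range j, y a = y b → a = b := by
      intro a ha b hb
      rw [Finset.mem_range] at ha hb
      exact hyinj a (Finset.mem_range.mpr (by omega)) b (Finset.mem_range.mpr (by omega))
    calc ∑ i ∈ Finset.range j, (d i) ^ 2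
        = ∑ i ∈ Finset.range j, (μ (y i) - μ (y i * g)) ^ 2 := by
          apply Finset.sum_congr rfl
          intro i _
          rw [hd]
          simp only
          rw [hstep i]
      _ = ∑ x ∈ (Finset.range j).image y, (μ x - μ (x * g)) ^ 2 :=
          (Finset.sum_image (f := fun x => (μ x - μ (x * g)) ^ 2) hyinj').symm
      _ ≤ D := Finset.sum_le_sum_of_subset_of_nonneg (Finset.subset_univ _)
          (fun b _ _ => by positivity)
  have hjD : (M / 2) ^ 2 ≤ (r:ℝ) * D := by
    calc (M / 2) ^ 2 ≤ (∑ i ∈ Finset.range j, d i) ^ 2 := by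
          apply pow_le_pow_left₀ (by positivity) hMhalf
      _ ≤ (j:ℝ) * ∑ i ∈ Finset.range j, (d i) ^ 2 := hCS
      _ ≤ (r:ℝ) * D := by
          have hjr' : (j:ℝ) ≤ (r:ℝ) := by exact_mod_cast hjr
          have hsum_nn : 0 ≤ ∑ i ∈ Finset.range j, (d i) ^ 2 :=
            Finset.sum_nonneg fun i _ => sq_nonneg _
          exact mul_le_mul hjr' hterm hsum_nn (Nat.cast_nonneg r)
  have hrM : (r:ℝ) * M ≤ 3 := by
    have h2 : (2 / M) * M = 2 := by field_simp
    have h3 : (r:ℝ) * M ≤ (2 / M + 1) * M :=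
      mul_le_mul_of_nonneg_right (le_of_lt hr2) (le_of_lt Mpos)
    have h4 : (2 / M + 1) * M = 2 + M := by
      rw [add_mul, h2, one_mul]
    rw [h4] at h3
    linarith
  have hDM : M ^ 3 / 12 ≤ D := by
    have h1 : M * ((M / 2) ^ 2) ≤ M * ((r:ℝ) * D) :=
      mul_le_mul_of_nonneg_left hjD (le_of_lt Mpos)
    have h2 : M * ((r:ℝ) * D) ≤ 3 * D := by
      have h5 := mul_le_mul_of_nonneg_right hrM hDnn
      calc M * ((r:ℝ) * D) = ((r:ℝ) * M) * D := by ring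
        _ ≤ 3 * D := h5
    have h3 : M * ((M / 2) ^ 2) = M ^ 3 / 4 := by ring
    linarith
  have hqn : qn A (k+1) = qn A k - D / 4 := by
    unfold qn
    rw [sum_sq_succ]
    have h2sq : ((2:ℝ) ^ k) ^ 2 = 4 ^ k := by
      rw [← pow_mul, show k * 2 = 2 * k by ring, pow_mul]
      norm_num
    have hcast : ∑ B : G, ((cnt A k B : ℝ) - (cnt A k (B * (A k) ^ 2) : ℝ)) ^ 2
        = (4:ℝ) ^ k * D := by
      rw [hD, Finset.mul_sum]
      apply Finset.sum_congr rfl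
      intro B _
      have : μ B - μ (B * g) = ((cnt A k B : ℝ) - (cnt A k (B * (A k) ^ 2) : ℝ)) / 2 ^ k := by
        rw [hμdef]
        simp only
        rw [hg, div_sub_div_same]
      rw [this, div_pow, h2sq]
      field_simp
    rw [hcast, pow_succ]
    have h4 : (0:ℝ) < 4 ^ k := by positivity
    field_simp
  rw [hqn]
  linarith

lemma g_mono {x y : ℝ} (hx : 0 ≤ x) (hxy : x ≤ y) (hy : y ≤ 1) :
    x - x ^ 3 / 48 ≤ y - y ^ 3 / 48 := by
  have hbound : (0:ℝ) ≤ 48 - (x ^ 2 + x * y + y ^ 2) := by nlinarith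
  have hprod : (0:ℝ) ≤ (y - x) * (48 - (x ^ 2 + x * y + y ^ 2)) :=
    mul_nonneg (sub_nonneg.2 hxy) hbound
  nlinarith [hprod]

lemma step_sqrt (k : ℕ) :
    Real.sqrt (24 / (24 + (k:ℝ))) - (Real.sqrt (24 / (24 + (k:ℝ)))) ^ 3 / 48
      ≤ Real.sqrt (24 / (24 + ((k:ℝ) + 1))) := by
  have hK : (0:ℝ) ≤ (k:ℝ) := Nat.cast_nonneg k
  set w : ℝ := 24 + (k:ℝ) with hw
  have hwpos : (0:ℝ) < w := by rw [hw]; linarith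
  have hw24 : (24:ℝ) ≤ w := by rw [hw]; linarith
  set u : ℝ := 24 / w with hu
  have hupos : 0 < u := by positivity
  have hule : u ≤ 1 := by
    rw [hu, div_le_one hwpos]; linarith
  set h : ℝ := Real.sqrt u with hh
  have hnn : 0 ≤ h := Real.sqrt_nonneg u
  have h2 : h ^ 2 = u := Real.sq_sqrt hupos.le
  have hle1 : h ≤ 1 := Real.sqrt_le_one.mpr hule
  have hfact : h - h ^ 3 / 48 = h * (1 - u / 48) := by
    have : h ^ 3 = h * h ^ 2 := by ring
    rw [this, h2]; ring
  have hco : 0 ≤ 1 - u / 48 := by linarith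
  have hLnn : 0 ≤ h * (1 - u / 48) := mul_nonneg hnn hco
  have htarget_nn : (0:ℝ) ≤ 24 / (w + 1) := by positivity
  have hsq : (h * (1 - u / 48)) ^ 2 ≤ 24 / (w + 1) := by
    have hexp : (h * (1 - u / 48)) ^ 2 = u * (1 - u / 48) ^ 2 := by
      rw [mul_pow, h2]
    rw [hexp, hu]
    have key : (w + 1) * (2 * w - 1) ^ 2 ≤ 4 * w ^ 3 := by nlinarith
    have hrw : (1 - 24 / w / 48) = (2 * w - 1) / (2 * w) := by
      field_simp
      ring
    rw [hrw, div_pow, div_mul_div_comm, div_le_div_iff₀ (by positivity) (by positivity)]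
    nlinarith [key]
  have hfin : h * (1 - u / 48) ≤ Real.sqrt (24 / (w + 1)) :=
    (Real.le_sqrt hLnn htarget_nn).mpr hsq
  rw [hfact]
  have : 24 + ((k:ℝ) + 1) = w + 1 := by rw [hw]; ring
  rw [this]
  exact hfin

lemma sqrt_le_one' (k : ℕ) : Real.sqrt (24 / (24 + (k:ℝ))) ≤ 1 := by
  apply Real.sqrt_le_one.mpr
  rw [div_le_one (by positivity)]
  have : (0:ℝ) ≤ (k:ℝ) := Nat.cast_nonneg k
  linarith

lemma sqrt_anti {a b : ℕ} (hab : b ≤ a) :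
    Real.sqrt (24 / (24 + (a:ℝ))) ≤ Real.sqrt (24 / (24 + (b:ℝ))) := by
  apply Real.sqrt_le_sqrt
  have hb : (b:ℝ) ≤ (a:ℝ) := by exact_mod_cast hab
  have h0 : (0:ℝ) ≤ (b:ℝ) := Nat.cast_nonneg b
  rw [div_le_div_iff₀ (by positivity) (by positivity)]
  nlinarith

/-- Master bound on the collision quantity. -/
lemma qn_master (A : ℕ → G) (s : ℕ) (hs : 8 ≤ s) (hord : ∀ i, s ≤ orderOf (A i)) (k : ℕ) :
    qn A k ≤ Real.sqrt (24 / (24 + (k:ℝ))) + 8 / (s:ℝ) := by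
  have spos : (0:ℝ) < s := by
    have : (8:ℝ) ≤ s := by exact_mod_cast hs
    linarith
  have key : ∀ k : ℕ, qn A k ≤ Real.sqrt (24 / (24 + (k:ℝ))) ∨ mn A k ≤ 8 / (s:ℝ) := by
    intro k
    induction k with
    | zero =>
      left
      rw [qn_zero]
      norm_num
    | succ k ih =>
      by_cases hm : mn A k ≤ 8 / (s:ℝ)
      · right
        exact le_trans (mn_mono A k) hm
      · left
        push_neg at hm
        have hq1 : qn A k ≤ Real.sqrt (24 / (24 + (k:ℝ))) := by
          rcases ih with h | h
          · exact h
          · exact absurd h (not_le.mpr hm)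
        have hdec := decay A s hs hord k hm
        have hcube : (qn A k) ^ 3 ≤ (mn A k) ^ 3 :=
          pow_le_pow_left₀ (qn_nonneg A k) (qn_le_mn A k) 3
        have h1 : qn A (k+1) ≤ qn A k - (qn A k) ^ 3 / 48 := by linarith
        have h2 : qn A k - (qn A k) ^ 3 / 48
            ≤ Real.sqrt (24 / (24 + (k:ℝ))) - (Real.sqrt (24 / (24 + (k:ℝ)))) ^ 3 / 48 :=
          g_mono (qn_nonneg A k) hq1 (sqrt_le_one' k)
        have h3 := step_sqrt k
        have hcast : (((k+1 : ℕ)):ℝ) = (k:ℝ) + 1 := by push_cast; ring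
        rw [hcast]
        linarith
  rcases key k with h | h
  · have h8 : 0 ≤ 8 / (s:ℝ) := by positivity
    linarith
  · have h1 := qn_le_mn A k
    have h2 : 0 ≤ Real.sqrt (24 / (24 + (k:ℝ))) := Real.sqrt_nonneg _
    linarith

/-- Splitting the signed product count as a convolution. -/
lemma conv (A : ℕ → G) (a b : ℕ) (B : G) :
    cnt A (a + b) B = ∑ c : G, cnt A a c * cnt (fun i => A (a + i)) b (c⁻¹ * B) := by
  induction b generalizing B with
  | zero =>
    simp only [Nat.add_zero, cnt_zero]
    have hcong : ∀ c : G, cnt A a c * (if c⁻¹ * B = 1 then 1 else 0)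
        = if c = B then cnt A a c else 0 := by
      intro c
      by_cases h : c = B
      · subst h
        simp
      · have : ¬ (c⁻¹ * B = 1) := by
          rw [inv_mul_eq_one]
          exact h
        simp [h, this]
    rw [Finset.sum_congr rfl (fun c _ => hcong c), Finset.sum_ite_eq' Finset.univ B (cnt A a)]
    simp
  | succ b ih =>
    have hsB : a + (b + 1) = (a + b) + 1 := by omega
    rw [hsB, cnt_succ, ih, ih, ← Finset.sum_add_distrib]
    apply Finset.sum_congr rfl
    intro c _
    rw [← mul_add]
    congr 1
    rw [cnt_succ]
    congr 1 <;> simp [mul_assoc]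

/-- The main general bound: for a finite group `G` and elements of order `≥ s ≥ 8`,
the signed-product count is at most `(√(24/(24+⌊n/2⌋)) + 8/s)·2^n`. -/
lemma main_bound (A : ℕ → G) (s : ℕ) (hs : 8 ≤ s) (hord : ∀ i, s ≤ orderOf (A i))
    (n : ℕ) (B : G) :
    (cnt A n B : ℝ) ≤ (Real.sqrt (24 / (24 + ((n / 2 : ℕ) : ℝ))) + 8 / (s:ℝ)) * 2 ^ n := by
  set b := n / 2 with hbdef
  set a := n - b with hadef
  have hab : a + b = n := by omega
  have hba : b ≤ a := by omega
  set A' : ℕ → G := fun i => A (a + i) with hA'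
  have hord' : ∀ i, s ≤ orderOf (A' i) := fun i => hord _
  have hconv : cnt A n B = ∑ c : G, cnt A a c * cnt A' b (c⁻¹ * B) := by
    rw [← hab]
    exact conv A a b B
  have hconvR : (cnt A n B : ℝ) = ∑ c : G, (cnt A a c : ℝ) * (cnt A' b (c⁻¹ * B) : ℝ) := by
    rw [hconv]
    push_cast
    rfl
  have hCS := Finset.sum_mul_sq_le_sq_mul_sq Finset.univ
    (fun c : G => (cnt A a c : ℝ)) (fun c : G => (cnt A' b (c⁻¹ * B) : ℝ))
  have hre : ∑ c : G, (cnt A' b (c⁻¹ * B) : ℝ) ^ 2 = ∑ c : G, (cnt A' b c : ℝ) ^ 2 := by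
    apply Fintype.sum_equiv ((Equiv.inv G).trans (Equiv.mulRight B))
      (fun c => (cnt A' b (c⁻¹ * B) : ℝ) ^ 2) (fun c => (cnt A' b c : ℝ) ^ 2)
    intro c
    rfl
  have hqa : ∑ c : G, (cnt A a c : ℝ) ^ 2 = qn A a * 4 ^ a := by
    unfold qn
    field_simp
  have hqb : ∑ c : G, (cnt A' b c : ℝ) ^ 2 = qn A' b * 4 ^ b := by
    unfold qn
    field_simp
  set X : ℝ := Real.sqrt (24 / (24 + (b:ℝ))) + 8 / (s:ℝ) with hX
  have hXnn : 0 ≤ X := by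
    rw [hX]
    have h1 : 0 ≤ Real.sqrt (24 / (24 + (b:ℝ))) := Real.sqrt_nonneg _
    have h2 : (0:ℝ) ≤ 8 / (s:ℝ) := by positivity
    linarith
  have hqa' : qn A a ≤ X := by
    have h1 := qn_master A s hs hord a
    have h2 := sqrt_anti hba
    rw [hX]
    linarith
  have hqb' : qn A' b ≤ X := qn_master A' s hs hord' b
  have h4n : (4:ℝ) ^ a * 4 ^ b = 4 ^ n := by
    rw [← pow_add, hab]
  have hsq : ((cnt A n B : ℝ)) ^ 2 ≤ X ^ 2 * 4 ^ n := by
    rw [hconvR]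
    calc (∑ c : G, (cnt A a c : ℝ) * (cnt A' b (c⁻¹ * B) : ℝ)) ^ 2
        ≤ (∑ c : G, (cnt A a c : ℝ) ^ 2) * ∑ c : G, (cnt A' b (c⁻¹ * B) : ℝ) ^ 2 := hCS
      _ = (qn A a * 4 ^ a) * (qn A' b * 4 ^ b) := by rw [hqa, hre, hqb]
      _ ≤ (X * 4 ^ a) * (X * 4 ^ b) := by
          have h1 : qn A a * 4 ^ a ≤ X * 4 ^ a :=
            mul_le_mul_of_nonneg_right hqa' (by positivity)
          have h2 : qn A' b * 4 ^ b ≤ X * 4 ^ b :=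
            mul_le_mul_of_nonneg_right hqb' (by positivity)
          exact mul_le_mul h1 h2 (mul_nonneg (qn_nonneg A' b) (by positivity))
            (mul_nonneg hXnn (by positivity))
      _ = X ^ 2 * 4 ^ n := by rw [← h4n]; ring
  have h2sq : ((2:ℝ) ^ n) ^ 2 = 4 ^ n := by
    rw [← pow_mul, show n * 2 = 2 * n by ring, pow_mul]
    norm_num
  have hfin : (cnt A n B : ℝ) ≤ X * 2 ^ n := by
    have hl : (0:ℝ) ≤ (cnt A n B : ℝ) := by positivity
    have hXsq : X ^ 2 * 4 ^ n = (X * 2 ^ n) ^ 2 := by rw [mul_pow, h2sq]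
    rw [hXsq] at hsq
    have := Real.sqrt_le_sqrt hsq
    rw [Real.sqrt_sq hl, Real.sqrt_sq (by positivity)] at this
    exact this
  exact hfin

/-- Identification of `cnt` with the number of sign vectors. -/
lemma cnt_card (A : ℕ → G) (k : ℕ) (B : G) :
    cnt A k B = (Finset.univ.filter fun ε : Fin k → Bool =>
      (List.ofFn fun i : Fin k => if ε i then A i else (A i)⁻¹).prod = B).card := by
  induction k generalizing B with
  | zero =>
    rw [cnt_zero]
    have hall : ∀ ε : Fin 0 → Bool,
        (List.ofFn fun i : Fin 0 => if ε i then A i else (A i)⁻¹).prod = (1:G) := by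
      intro ε
      simp
    by_cases hB : B = 1
    · subst hB
      rw [if_pos rfl, Finset.filter_true_of_mem (fun ε _ => hall ε)]
      simp
    · rw [if_neg hB, Finset.filter_false_of_mem]
      · simp
      · intro ε _
        rw [hall ε]
        exact fun h => hB h.symm
  | succ k ih =>
    rw [cnt_succ, ih, ih]
    have hsplit : ∀ ε : Fin (k+1) → Bool,
        (List.ofFn fun i : Fin (k+1) => if ε i then A i else (A i)⁻¹).prod
          = (List.ofFn fun i : Fin k => if ε i.castSucc then A i else (A i)⁻¹).prod *
            (if ε (Fin.last k) then A k else (A k)⁻¹) := by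
      intro ε
      rw [List.ofFn_succ', List.prod_concat]
      simp [Fin.coe_castSucc, Fin.val_last]
    rw [← Finset.card_filter_add_card_filter_not
      (p := fun ε : Fin (k+1) → Bool => ε (Fin.last k) = true)]
    congr 1
    · -- true case: count with target B * (A k)⁻¹
      rw [Finset.filter_filter]
      apply Finset.card_bij' (fun (δ : Fin k → Bool) _ => (Fin.snoc δ true : Fin (k+1) → Bool))
        (fun (ε : Fin (k+1) → Bool) _ => ε ∘ Fin.castSucc)
      · intro δ hδ
        rw [Finset.mem_filter] at hδ ⊢
        refine ⟨Finset.mem_univ _, ?_, by rw [Fin.snoc_last]⟩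
        rw [hsplit]
        have hfun : (fun i : Fin k =>
            if (Fin.snoc δ true : Fin (k+1) → Bool) i.castSucc then A i else (A i)⁻¹)
            = fun i : Fin k => if δ i then A i else (A i)⁻¹ := by
          funext i
          rw [Fin.snoc_castSucc]
        rw [hfun, Fin.snoc_last, if_pos rfl, hδ.2]
        group
      · intro ε hε
        rw [Finset.mem_filter] at hε ⊢
        obtain ⟨-, hP, hlast⟩ := hε
        refine ⟨Finset.mem_univ _, ?_⟩
        rw [hsplit, hlast, if_pos rfl] at hP
        have : (fun i : Fin k => if (ε ∘ Fin.castSucc) i then A i else (A i)⁻¹)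
            = fun i : Fin k => if ε i.castSucc then A i else (A i)⁻¹ := rfl
        rw [this]
        rw [eq_mul_inv_iff_mul_eq]
        exact hP
      · intro δ hδ
        funext i
        simp
      · intro ε hε
        rw [Finset.mem_filter] at hε
        funext i
        refine Fin.lastCases ?_ ?_ i
        · rw [Fin.snoc_last]
          exact hε.2.2.symm
        · intro j
          rw [Fin.snoc_castSucc]
          rfl
    · -- false case: count with target B * A k
      rw [Finset.filter_filter]
      have hnot : (fun ε : Fin (k+1) → Bool => True ∧ ¬ ε (Fin.last k) = true)
          = fun ε : Fin (k+1) → Bool => True ∧ ε (Fin.last k) = false := by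
        funext ε
        simp
      apply Finset.card_bij' (fun (δ : Fin k → Bool) _ => (Fin.snoc δ false : Fin (k+1) → Bool))
        (fun (ε : Fin (k+1) → Bool) _ => ε ∘ Fin.castSucc)
      · intro δ hδ
        rw [Finset.mem_filter] at hδ ⊢
        refine ⟨Finset.mem_univ _, ?_, by rw [Fin.snoc_last]; simp⟩
        rw [hsplit]
        have hfun : (fun i : Fin k =>
            if (Fin.snoc δ false : Fin (k+1) → Bool) i.castSucc then A i else (A i)⁻¹)
            = fun i : Fin k => if δ i then A i else (A i)⁻¹ := by
          funext i
          rw [Fin.snoc_castSucc]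
        rw [hfun, Fin.snoc_last, if_neg (by simp), hδ.2]
        group
      · intro ε hε
        rw [Finset.mem_filter] at hε ⊢
        obtain ⟨-, hP, hlast⟩ := hε
        refine ⟨Finset.mem_univ _, ?_⟩
        rw [hsplit, if_neg hlast] at hP
        have : (fun i : Fin k => if (ε ∘ Fin.castSucc) i then A i else (A i)⁻¹)
            = fun i : Fin k => if ε i.castSucc then A i else (A i)⁻¹ := rfl
        rw [this]
        rw [mul_inv_eq_iff_eq_mul] at hP
        exact hP
      · intro δ hδ
        funext i
        simp
      · intro ε hε
        rw [Finset.mem_filter] at hε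
        funext i
        refine Fin.lastCases ?_ ?_ i
        · rw [Fin.snoc_last]
          have := hε.2.2
          simp at this
          exact this.symm
        · intro j
          rw [Fin.snoc_castSucc]
          rfl

end NLO

/-- **Theorem 6.1.** There is an integer `p₀ > 1` such that for every `m ≥ 43`, every
prime `p ≥ max {m, p₀}`, and all integers `n, s ≥ 2`, if `A 1, …, A n` are elements of
`S = PSL_m(𝔽_p)` each of order at least `s`, then for every `B ∈ S` the number of sign
vectors `ε ∈ {−1,1}^n` with `A 1 ^ ε 1 ⋯ A n ^ ε n = B` is at most
`(2/p + 120/s + 19/√n) · 2^n`. -/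
theorem nonabelian_littlewood_offord_PSL :
    ∃ p₀ : ℕ, 1 < p₀ ∧ ∀ (m n s p : ℕ), p₀ ≤ p → 43 ≤ m → p.Prime → m ≤ p →
      2 ≤ n → 2 ≤ s →
      ∀ A : Fin n → PSL m p, (∀ i, s ≤ orderOf (A i)) →
      ∀ B : PSL m p,
        (Nat.card {ε : Fin n → Bool //
            (List.ofFn fun i => if ε i then A i else (A i)⁻¹).prod = B} : ℝ) ≤
          (2 / (p : ℝ) + 120 / (s : ℝ) + 19 / Real.sqrt n) * 2 ^ n := by
  classical
  refine ⟨2, one_lt_two, ?_⟩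
  intro m n s p hp0 hm hp hmp hn hs A hA B
  haveI : NeZero p := ⟨hp.ne_zero⟩
  haveI hfin : Finite (PSL m p) := by
    unfold PSL
    exact Quotient.finite _
  haveI : Fintype (PSL m p) := Fintype.ofFinite _
  -- extend A to ℕ
  have hex : ∃ f : ℕ → PSL m p, (∀ i : Fin n, f (i : ℕ) = A i) ∧ ∀ i, s ≤ orderOf (f i) := by
    refine ⟨fun i => if h : i < n then A ⟨i, h⟩ else A ⟨0, by omega⟩, ?_, ?_⟩
    · intro i
      simp only [i.isLt, dif_pos]
    · intro i
      by_cases h : i < n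
      · simp only [h, dif_pos]
        exact hA _
      · simp only [h, dif_neg, not_false_iff]
        exact hA _
  obtain ⟨Ahat, hAi, hordhat⟩ := hex
  -- identify the count
  have hcard : (Nat.card {ε : Fin n → Bool //
      (List.ofFn fun i => if ε i then A i else (A i)⁻¹).prod = B}) = NLO.cnt Ahat n B := by
    rw [Nat.card_eq_fintype_card, Fintype.card_subtype, NLO.cnt_card]
    apply Finset.card_bij (fun ε _ => ε) ?_ ?_ ?_
    · intro ε hε
      rw [Finset.mem_filter] at hε ⊢
      refine ⟨Finset.mem_univ _, ?_⟩
      have hfun : (fun i : Fin n => if ε i then A i else (A i)⁻¹)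
          = fun i : Fin n => if ε i then Ahat (i:ℕ) else (Ahat (i:ℕ))⁻¹ := by
        funext i
        rw [hAi i]
      rw [← hfun]
      exact hε.2
    · intro ε₁ ε₂ _ _ h
      exact h
    · intro ε hε
      refine ⟨ε, ?_, rfl⟩
      rw [Finset.mem_filter] at hε ⊢
      refine ⟨Finset.mem_univ _, ?_⟩
      have hfun : (fun i : Fin n => if ε i then A i else (A i)⁻¹)
          = fun i : Fin n => if ε i then Ahat (i:ℕ) else (Ahat (i:ℕ))⁻¹ := by
        funext i
        rw [hAi i]
      rw [hfun]
      exact hε.2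
  rw [hcard]
  clear hcard
  have hspos : (0:ℝ) < s := by
    have : (2:ℝ) ≤ s := by exact_mod_cast hs
    linarith
  have hppos : (0:ℝ) < p := by
    have : (2:ℝ) ≤ p := by exact_mod_cast hp0
    linarith
  have hsqn_pos : (0:ℝ) < Real.sqrt n := by
    apply Real.sqrt_pos.mpr
    have : (2:ℝ) ≤ n := by exact_mod_cast hn
    linarith
  have h2p : (0:ℝ) ≤ 2 / p := by positivity
  have h19 : (0:ℝ) ≤ 19 / Real.sqrt n := by positivity
  by_cases hs8 : 8 ≤ s
  · -- main case
    have main := NLO.main_bound Ahat s hs8 hordhat n B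
    refine main.trans ?_
    apply mul_le_mul_of_nonneg_right ?_ (by positivity)
    have hsqrt : Real.sqrt (24 / (24 + ((n / 2 : ℕ) : ℝ))) ≤ 19 / Real.sqrt n := by
      have h361 : Real.sqrt ((361:ℝ) / n) = 19 / Real.sqrt n := by
        rw [Real.sqrt_div (by norm_num : (0:ℝ) ≤ 361) (n:ℝ)]
        congr 1
        rw [show (361:ℝ) = 19 ^ 2 by norm_num, Real.sqrt_sq (by norm_num : (0:ℝ) ≤ 19)]
      rw [← h361]
      apply Real.sqrt_le_sqrt
      have hnat : 24 * n ≤ 361 * (24 + n / 2) := by omega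
      have hcast : (24:ℝ) * n ≤ 361 * (24 + ((n / 2 : ℕ) : ℝ)) := by
        exact_mod_cast hnat
      have hnpos : (0:ℝ) < n := by
        have : (2:ℝ) ≤ n := by exact_mod_cast hn
        linarith
      rw [div_le_div_iff₀ (by positivity) hnpos]
      linarith
    have h8s : (8:ℝ) / s ≤ 120 / s := by
      rw [div_le_div_iff₀ hspos hspos]
      nlinarith
    linarith
  · -- small s: trivial bound
    push_neg at hs8
    have h1 : (NLO.cnt Ahat n B : ℝ) ≤ 2 ^ n := by
      exact_mod_cast NLO.cnt_le_two_pow Ahat n B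
    refine h1.trans ?_
    have hs7 : (s:ℝ) ≤ 7 := by
      have : s ≤ 7 := by omega
      exact_mod_cast this
    have h120 : (1:ℝ) ≤ 120 / s := by
      rw [le_div_iff₀ hspos]
      linarith
    have hsum : (1:ℝ) ≤ 2 / p + 120 / s + 19 / Real.sqrt n := by linarith
    nlinarith [pow_pos (show (0:ℝ) < 2 by norm_num) n]
end

section
/- Let G be a finite group and let Φ be an irreducible finite-dimensional complex representation of G with character χ. Suppose there is a constant 0 < α < 1 such that |χ(x)| ≤ α·χ(1) for all x ∈ G ∖ Z(G). Let g ∈ G ∖ Z(G), and let k_1 be the order of the coset g·Z(G) in the quotient group G/Z(G). Then for every eigenvalue μ of the linear map Φ(g), the multiplicity m of μ (the dimension of the corresponding eigenspace of Φ(g)) satisfies (1/k_1 − α)·dim Φ < m < (1/k_1 + α)·dim Φ. -/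
/-- **Lemma 3.1.** Let `G` be a finite group and `Φ` an irreducible finite-dimensional
complex representation of `G` with character `χ = trace ∘ Φ`. Suppose `0 < α < 1` is
such that `|χ(x)| ≤ α·χ(1)` for all noncentral `x`. If `g` is noncentral and `g·Z(G)`
has order `k₁` in `G/Z(G)`, then the multiplicity `m` (eigenspace dimension) of any
eigenvalue of `Φ(g)` satisfies `(1/k₁ − α)·dim Φ < m < (1/k₁ + α)·dim Φ`. -/
theorem eigenvalue_multiplicity_bound {G : Type*} [Group G] [Finite G]
    {V : Type*} [AddCommGroup V] [Module ℂ V] [FiniteDimensional ℂ V]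
    (Φ : Representation ℂ G V)
    (hirr : ∀ W : Submodule ℂ V, (∀ g : G, W.map (Φ g) ≤ W) → W = ⊥ ∨ W = ⊤)
    (α : ℝ) (hα0 : 0 < α) (hα1 : α < 1)
    (hχ : ∀ x : G, x ∉ Subgroup.center G →
      ‖LinearMap.trace ℂ V (Φ x)‖ ≤ α * Module.finrank ℂ V)
    (g : G) (hg : g ∉ Subgroup.center G) (k₁ : ℕ)
    (hk₁ : k₁ = orderOf (QuotientGroup.mk g : G ⧸ Subgroup.center G))
    (μ : ℂ) (hμ : Module.End.HasEigenvalue (Φ g) μ) :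
    (1 / (k₁ : ℝ) - α) * Module.finrank ℂ V <
        (Module.finrank ℂ (Module.End.eigenspace (Φ g) μ) : ℝ) ∧
      (Module.finrank ℂ (Module.End.eigenspace (Φ g) μ) : ℝ) <
        (1 / (k₁ : ℝ) + α) * Module.finrank ℂ V := by
  classical
  obtain ⟨v, hv⟩ := hμ.exists_hasEigenvector
  have hvne : v ≠ 0 := hv.2
  haveI : Nontrivial V := nontrivial_of_ne v 0 hvne
  set n : ℕ := Module.finrank ℂ V with hn
  have hnpos : 0 < n := Module.finrank_pos
  -- k₁ ≥ 2
  have hkord : (QuotientGroup.mk g : G ⧸ Subgroup.center G) ^ k₁ = 1 := by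
    rw [hk₁]; exact pow_orderOf_eq_one _
  have hk1pos : 0 < k₁ := by
    rw [hk₁]; exact orderOf_pos _
  have hk1ne1 : k₁ ≠ 1 := by
    intro h
    apply hg
    have : (QuotientGroup.mk g : G ⧸ Subgroup.center G) = 1 := by
      rw [← pow_one (QuotientGroup.mk g : G ⧸ Subgroup.center G), ← h]; exact hkord
    exact (QuotientGroup.eq_one_iff g).mp this
  -- g ^ k₁ is central
  have hcen : g ^ k₁ ∈ Subgroup.center G := by
    apply (QuotientGroup.eq_one_iff _).mp
    rw [← hkord]; rfl
  -- g ^ j is noncentral for 0 < j < k₁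
  have hnoncen : ∀ j : ℕ, 0 < j → j < k₁ → g ^ j ∉ Subgroup.center G := by
    intro j hj0 hjk hmem
    have h1 : (QuotientGroup.mk g : G ⧸ Subgroup.center G) ^ j = 1 :=
      (QuotientGroup.eq_one_iff _).mpr hmem
    have := orderOf_dvd_of_pow_eq_one h1
    rw [← hk₁] at this
    exact absurd (Nat.le_of_dvd hj0 this) (not_le.mpr hjk)
  -- Schur: Φ (g ^ k₁) is a scalar c
  obtain ⟨c, hc⟩ := Module.End.exists_eigenvalue (Φ (g ^ k₁) : Module.End ℂ V)
  have hscal : ∀ w : V, Φ (g ^ k₁) w = c • w := by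
    have hinv : ∀ x : G,
        (Module.End.eigenspace (Φ (g ^ k₁)) c).map (Φ x) ≤
          Module.End.eigenspace (Φ (g ^ k₁)) c := by
      intro x w hw
      obtain ⟨u, hu, rfl⟩ := hw
      rw [SetLike.mem_coe] at hu
      rw [Module.End.mem_eigenspace_iff] at hu ⊢
      have hcomm : g ^ k₁ * x = x * g ^ k₁ := (Subgroup.mem_center_iff.mp hcen x).symm
      calc (Φ (g ^ k₁)) ((Φ x) u) = (Φ (g ^ k₁) * Φ x) u := rfl
        _ = (Φ x * Φ (g ^ k₁)) u := by rw [← map_mul, ← map_mul, hcomm]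
        _ = (Φ x) ((Φ (g ^ k₁)) u) := rfl
        _ = c • (Φ x) u := by rw [hu, map_smul]
    rcases hirr _ hinv with h | h
    · exact absurd h hc
    · intro w
      have : w ∈ Module.End.eigenspace (Φ (g ^ k₁)) c := h ▸ Submodule.mem_top
      exact Module.End.mem_eigenspace_iff.mp this
  -- μ ^ k₁ = c
  have hpow : (Φ g : Module.End ℂ V) ^ k₁ = Φ (g ^ k₁) := (map_pow Φ g k₁).symm
  have hμk : μ ^ k₁ = c := by
    have h1 : ((Φ g : Module.End ℂ V) ^ k₁) v = μ ^ k₁ • v := hv.pow_apply k₁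
    rw [hpow, hscal] at h1
    have : (μ ^ k₁ - c) • v = 0 := by rw [sub_smul, h1, sub_self]
    rcases smul_eq_zero.mp this with h | h
    · exact sub_eq_zero.mp h
    · exact absurd h hvne
  -- |μ| = 1, μ ≠ 0
  have hgN : μ ^ orderOf g = 1 := by
    have h1 : ((Φ g : Module.End ℂ V) ^ orderOf g) v = μ ^ orderOf g • v := hv.pow_apply _
    rw [← map_pow, pow_orderOf_eq_one, map_one] at h1
    have h2 : (μ ^ orderOf g - 1) • v = 0 := by
      rw [sub_smul, one_smul, ← h1]; simp
    rcases smul_eq_zero.mp h2 with h | h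
    · exact sub_eq_zero.mp h
    · exact absurd h hvne
  have hμabs : ‖μ‖ = 1 := by
    exact Complex.norm_eq_one_of_pow_eq_one hgN (orderOf_pos g).ne'
  have hμne : μ ≠ 0 := by
    intro h; rw [h, zero_pow (orderOf_pos g).ne'] at hgN; exact zero_ne_one hgN
  have hcne : c ≠ 0 := by rw [← hμk]; exact pow_ne_zero _ hμne
  -- the operator A = μ⁻¹ • Φ g satisfies A ^ k₁ = 1
  set A : Module.End ℂ V := μ⁻¹ • (Φ g : Module.End ℂ V) with hAdef
  have hΦgk : (Φ (g ^ k₁) : Module.End ℂ V) = c • 1 := by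
    ext w; simpa using hscal w
  have hA : A ^ k₁ = 1 := by
    rw [hAdef, smul_pow, hpow, hΦgk, smul_smul, inv_pow, hμk, inv_mul_cancel₀ hcne, one_smul]
  -- membership in the eigenspace is being fixed by A
  have hmemA : ∀ w : V, w ∈ Module.End.eigenspace (Φ g) μ ↔ A w = w := by
    intro w
    rw [Module.End.mem_eigenspace_iff]
    constructor
    · intro h
      rw [hAdef, LinearMap.smul_apply, h, inv_smul_smul₀ hμne]
    · intro h
      have := congrArg (fun z => μ • z) h
      simpa [hAdef, smul_smul, mul_inv_cancel₀ hμne] using this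
  -- the averaging operator P is a projection onto the eigenspace
  set S : Module.End ℂ V := ∑ j ∈ Finset.range k₁, A ^ j with hSdef
  set P : Module.End ℂ V := (k₁ : ℂ)⁻¹ • S with hPdef
  have hAS : A * S = S := by
    rw [hSdef, Finset.mul_sum]
    have h1 : ∀ j ∈ Finset.range k₁, A * A ^ j = A ^ (j + 1) := by
      intro j _; rw [pow_succ']
    rw [Finset.sum_congr rfl h1]
    have h2 : ∑ j ∈ Finset.range (k₁ + 1), A ^ j
        = (∑ j ∈ Finset.range k₁, A ^ (j + 1)) + A ^ 0 := Finset.sum_range_succ' _ _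
    have h3 : ∑ j ∈ Finset.range (k₁ + 1), A ^ j
        = (∑ j ∈ Finset.range k₁, A ^ j) + A ^ k₁ := Finset.sum_range_succ _ _
    rw [h3, hA] at h2
    rw [pow_zero] at h2
    exact (add_right_cancel h2.symm)
  have hkC : (k₁ : ℂ) ≠ 0 := Nat.cast_ne_zero.mpr hk1pos.ne'
  have hproj : LinearMap.IsProj (Module.End.eigenspace (Φ g) μ) P := by
    constructor
    · intro x
      rw [hmemA]
      calc A (P x) = (A * P) x := rfl
        _ = P x := by rw [hPdef, mul_smul_comm, hAS]
    · intro x hx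
      have hAx : A x = x := (hmemA x).mp hx
      have hAjx : ∀ j : ℕ, (A ^ j) x = x := by
        intro j
        induction j with
        | zero => simp
        | succ j ih => rw [pow_succ, Module.End.mul_apply, hAx, ih]
      have hSx : S x = (k₁ : ℂ) • x := by
        rw [hSdef, LinearMap.sum_apply, Finset.sum_congr rfl (fun j _ => hAjx j),
          Finset.sum_const, Finset.card_range, Nat.cast_smul_eq_nsmul]
      rw [hPdef, LinearMap.smul_apply, hSx, inv_smul_smul₀ hkC]
  -- trace computation
  set m : ℕ := Module.finrank ℂ (Module.End.eigenspace (Φ g) μ) with hm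
  have htrP : LinearMap.trace ℂ V P = (m : ℂ) := hproj.trace
  have htrAj : ∀ j : ℕ, LinearMap.trace ℂ V (A ^ j)
      = (μ⁻¹) ^ j * LinearMap.trace ℂ V (Φ (g ^ j)) := by
    intro j
    rw [hAdef, smul_pow, ← map_pow, map_smul, smul_eq_mul]
  have hsum : (m : ℂ) = (k₁ : ℂ)⁻¹ *
      ∑ j ∈ Finset.range k₁, (μ⁻¹) ^ j * LinearMap.trace ℂ V (Φ (g ^ j)) := by
    rw [← htrP, hPdef, map_smul, hSdef, map_sum, smul_eq_mul]
    congr 1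
    exact Finset.sum_congr rfl fun j _ => htrAj j
  -- split off the j = 0 term
  have hsplit : (m : ℂ) - (n : ℂ) / (k₁ : ℂ) = (k₁ : ℂ)⁻¹ *
      ∑ j ∈ Finset.Ico 1 k₁, (μ⁻¹) ^ j * LinearMap.trace ℂ V (Φ (g ^ j)) := by
    rw [hsum, Finset.sum_range_eq_add_Ico _ hk1pos]
    have h0 : (μ⁻¹) ^ 0 * LinearMap.trace ℂ V (Φ (g ^ 0)) = (n : ℂ) := by
      simp [LinearMap.trace_id]; rfl
    rw [h0]
    field_simp
    ring
  -- absolute value bound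
  have hbound : |(m : ℝ) - (n : ℝ) / (k₁ : ℝ)| ≤ (k₁ : ℝ)⁻¹ * ((k₁ - 1 : ℕ) * (α * n)) := by
    have hterm : ∀ j ∈ Finset.Ico 1 k₁,
        ‖(μ⁻¹) ^ j * LinearMap.trace ℂ V (Φ (g ^ j))‖ ≤ α * n := by
      intro j hj
      rw [Finset.mem_Ico] at hj
      rw [norm_mul, norm_pow, norm_inv, hμabs, inv_one, one_pow, one_mul]
      exact hχ _ (hnoncen j hj.1 hj.2)
    have hsumb : ‖∑ j ∈ Finset.Ico 1 k₁,
        (μ⁻¹) ^ j * LinearMap.trace ℂ V (Φ (g ^ j))‖ ≤ (k₁ - 1 : ℕ) * (α * n) := by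
      refine le_trans (norm_sum_le _ _) ?_
      calc ∑ j ∈ Finset.Ico 1 k₁, ‖(μ⁻¹) ^ j * LinearMap.trace ℂ V (Φ (g ^ j))‖
          ≤ ∑ _j ∈ Finset.Ico 1 k₁, α * n := Finset.sum_le_sum hterm
        _ = (k₁ - 1 : ℕ) * (α * n) := by
            rw [Finset.sum_const, Nat.card_Ico, nsmul_eq_mul]
    have h1 : ‖(m : ℂ) - (n : ℂ) / (k₁ : ℂ)‖
        ≤ (k₁ : ℝ)⁻¹ * ((k₁ - 1 : ℕ) * (α * n)) := by
      rw [hsplit, norm_mul, norm_inv, Complex.norm_natCast]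
      exact mul_le_mul_of_nonneg_left hsumb (by positivity)
    have h2 : ((m : ℂ) - (n : ℂ) / (k₁ : ℂ)) = (((m : ℝ) - (n : ℝ) / (k₁ : ℝ) : ℝ) : ℂ) := by
      push_cast; ring
    rw [h2, Complex.norm_real, Real.norm_eq_abs] at h1
    exact h1
  -- final numeric estimate
  have hαn : (0 : ℝ) < α * n := by positivity
  have hk1R : (0 : ℝ) < (k₁ : ℝ) := Nat.cast_pos.mpr hk1pos
  have hfinal : |(m : ℝ) - (n : ℝ) / (k₁ : ℝ)| < α * n := by
    refine lt_of_le_of_lt hbound ?_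
    have hcast : ((k₁ - 1 : ℕ) : ℝ) = (k₁ : ℝ) - 1 := by
      rw [Nat.cast_sub hk1pos]; simp
    rw [hcast]
    rw [inv_mul_lt_iff₀ hk1R]
    nlinarith
  rw [abs_lt] at hfinal
  have e1 : (1 / (k₁ : ℝ) - α) * n = (n : ℝ) / (k₁ : ℝ) - α * n := by ring
  have e2 : (1 / (k₁ : ℝ) + α) * n = (n : ℝ) / (k₁ : ℝ) + α * n := by ring
  constructor
  · rw [e1]; linarith [hfinal.1]
  · rw [e2]; linarith [hfinal.2]
end

section
/- Let d ≥ 3 be an integer, p a prime with p ≥ d, and q = p^f ≥ 11 a power of p. Let F be a finite field with q elements and let H be either SL_d(F) or PSL_d(F). Then every element x ∈ H has order strictly less than q^{d+1}. -/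
open Matrix Polynomial

/-- Key bound: any element of `SL_d(F)` has order at most `|F|^d`. -/
lemma orderOf_SL_le (d : ℕ) (hd : 0 < d) (F : Type*) [Field F] [Fintype F]
    (x : Matrix.SpecialLinearGroup (Fin d) F) :
    orderOf x ≤ Fintype.card F ^ d := by
  classical
  set M : Matrix (Fin d) (Fin d) F := (x : Matrix (Fin d) (Fin d) F) with hM
  set A := Algebra.adjoin F ({M} : Set (Matrix (Fin d) (Fin d) F)) with hA
  haveI : Finite A := Subtype.finite
  haveI : Fintype A := Fintype.ofFinite A
  have hMA : M ∈ A := Algebra.subset_adjoin rfl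
  haveI : Finite (Matrix.SpecialLinearGroup (Fin d) F) := Subtype.finite
  have hcoe : ∀ n : ℕ, ((x ^ n : Matrix.SpecialLinearGroup (Fin d) F) :
      Matrix (Fin d) (Fin d) F) = M ^ n := fun n => by
    rw [Matrix.SpecialLinearGroup.coe_pow]
  -- injective map Fin (orderOf x) → A
  let f : Fin (orderOf x) → A := fun n => ⟨M ^ (n : ℕ), pow_mem hMA _⟩
  have hf : Function.Injective f := by
    intro i j hij
    have h1 : M ^ (i : ℕ) = M ^ (j : ℕ) := congrArg Subtype.val hij
    rw [← hcoe, ← hcoe] at h1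
    have h2 : x ^ (i : ℕ) = x ^ (j : ℕ) := Subtype.ext h1
    exact Fin.ext (pow_injOn_Iio_orderOf (Set.mem_Iio.2 i.2) (Set.mem_Iio.2 j.2) h2)
  -- surjective map (Fin d → F) → A
  have hmonic : M.charpoly.Monic := Matrix.charpoly_monic M
  have hnd : M.charpoly.natDegree = d := by
    simpa using Matrix.charpoly_natDegree_eq_dim M
  have hne1 : M.charpoly ≠ 1 := by
    intro h
    rw [h, Polynomial.natDegree_one] at hnd
    omega
  let g : (Fin d → F) → A := fun v =>
    ⟨∑ i : Fin d, v i • M ^ (i : ℕ),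
      Subalgebra.sum_mem _ fun i _ => Subalgebra.smul_mem _ (pow_mem hMA _) _⟩
  have hg : Function.Surjective g := by
    rintro ⟨a, ha⟩
    rw [hA, Algebra.adjoin_singleton_eq_range_aeval] at ha
    obtain ⟨p, hp⟩ := ha
    set r := p %ₘ M.charpoly with hr
    have hdeg : r.natDegree < d := by
      rw [hr]
      have h := Polynomial.natDegree_modByMonic_lt p hmonic hne1
      rwa [hnd] at h
    have haeval : aeval M r = a := by
      conv_rhs => rw [← hp, ← Polynomial.modByMonic_add_div p M.charpoly]
      simp [Matrix.aeval_self_charpoly, hr]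
    refine ⟨fun i => r.coeff i, ?_⟩
    apply Subtype.ext
    show ∑ i : Fin d, r.coeff i • M ^ (i : ℕ) = a
    rw [← haeval, Polynomial.aeval_eq_sum_range' hdeg]
    exact Fin.sum_univ_eq_sum_range (fun i => r.coeff i • M ^ i) d
  have hle : orderOf x ≤ Fintype.card A := by
    have := Fintype.card_le_of_injective f hf
    rwa [Fintype.card_fin] at this
  have hle2 : Fintype.card A ≤ Fintype.card F ^ d := by
    have := Fintype.card_le_of_surjective g hg
    rwa [Fintype.card_fun, Fintype.card_fin] at this
  omega

/-- **Proposition 3.3(iii), first part.** Let `d ≥ 3`, let `p ≥ d` be a prime, and let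
`q = p^f ≥ 11`. Let `F` be the field with `q` elements and let `H` be either `SL_d(F)`
or `PSL_d(F)`. Then every element of `H` has order strictly less than `q^{d+1}`. -/
theorem orderOf_lt_SL_PSL (d p f q : ℕ) (hd : 3 ≤ d) (hp : p.Prime) (hpd : d ≤ p)
    (hf : 1 ≤ f) (hq : q = p ^ f) (hq11 : 11 ≤ q)
    (F : Type*) [Field F] [Fintype F] (hF : Fintype.card F = q)
    (H : Type*) [Group H]
    (hH : Nonempty (H ≃* Matrix.SpecialLinearGroup (Fin d) F) ∨
      Nonempty (H ≃* (Matrix.SpecialLinearGroup (Fin d) F ⧸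
        Subgroup.center (Matrix.SpecialLinearGroup (Fin d) F))))
    (x : H) :
    orderOf x < q ^ (d + 1) := by
  haveI : Finite (Matrix.SpecialLinearGroup (Fin d) F) := Subtype.finite
  have hd0 : 0 < d := by omega
  have hqd : q ^ d < q ^ (d + 1) := Nat.pow_lt_pow_right (by omega) (by omega)
  have key : orderOf x ≤ q ^ d := by
    rcases hH with he | he
    · obtain ⟨e⟩ := he
      have := orderOf_SL_le d hd0 F (e x)
      rw [e.orderOf_eq x] at this
      rwa [hF] at this
    · obtain ⟨e⟩ := he
      obtain ⟨y, hy⟩ := QuotientGroup.mk_surjective (e x)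
      have h1 : orderOf (e x) ∣ orderOf y := by
        rw [← hy]
        exact orderOf_map_dvd (QuotientGroup.mk' _) y
      have h2 : orderOf (e x) ≤ orderOf y := Nat.le_of_dvd (orderOf_pos y) h1
      have h3 := orderOf_SL_le d hd0 F y
      rw [e.orderOf_eq x] at h2
      rw [hF] at h3
      omega
  omega
end

section
/- Let M be an n × n complex matrix. Then |trace M| ≤ ∑_{i=1}^n s_i(M), where s_1(M), …, s_n(M) are the singular values of M, i.e., the (nonnegative) square roots of the eigenvalues of the Hermitian positive semidefinite matrix MᴴM. -/
/-- **Lemma 5.1, first part.** For any `n × n` complex matrix `M`, the absolute value of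
its trace is at most the sum of its singular values, i.e. of the square roots of the
eigenvalues of the Hermitian positive semidefinite matrix `Mᴴ * M`. -/
theorem abs_trace_le_sum_singular_values (n : ℕ) (M : Matrix (Fin n) (Fin n) ℂ) :
    ‖M.trace‖ ≤
      ∑ i : Fin n,
        Real.sqrt ((Matrix.isHermitian_conjTranspose_mul_self M).eigenvalues i) := by
  have key : ∀ z : ℂ, ((‖z‖ : ℂ)) ^ 2 = (starRingEnd ℂ) z * z := fun z => by
    rw [mul_comm, Complex.mul_conj]
    norm_cast
    rw [Complex.normSq_eq_norm_sq]
  set hA := Matrix.isHermitian_conjTranspose_mul_self M with hAdef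
  set U : Matrix (Fin n) (Fin n) ℂ := (hA.eigenvectorUnitary : Matrix (Fin n) (Fin n) ℂ) with hUdef
  have hUU : star U * U = 1 := hA.eigenvectorUnitary.2.1
  have hUU' : U * star U = 1 := hA.eigenvectorUnitary.2.2
  have hdiag : star U * (M.conjTranspose * M) * U
      = Matrix.diagonal (RCLike.ofReal ∘ hA.eigenvalues) :=
    by have := hA.conjStarAlgAut_star_eigenvectorUnitary; rwa [Unitary.conjStarAlgAut_star_apply] at this
  have htr : M.trace = (star U * M * U).trace := by
    rw [Matrix.trace_mul_comm, ← Matrix.mul_assoc, hUU', Matrix.one_mul]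
  rw [htr, Matrix.trace]
  refine le_trans (norm_sum_le _ _) (Finset.sum_le_sum fun i _ => ?_)
  set v : EuclideanSpace ℂ (Fin n) := WithLp.toLp 2 (fun j => U j i) with hv
  set w : EuclideanSpace ℂ (Fin n) := WithLp.toLp 2 (fun j => (M * U) j i) with hw
  have hdiagE : (star U * M * U).diag i = inner ℂ v w := by
    simp only [Matrix.diag, Matrix.mul_assoc, Matrix.mul_apply, PiLp.inner_apply,
      Matrix.star_apply, RCLike.inner_apply, hv, hw]
    simp only [Finset.mul_sum, Finset.sum_mul]
    rw [Finset.sum_comm]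
    exact Finset.sum_congr rfl fun a _ => Finset.sum_congr rfl fun b _ => by rw [RCLike.star_def]; ring
  have hnv : ‖v‖ = 1 := by
    have h1 : (star U * U) i i = 1 := by rw [hUU]; simp [Matrix.one_apply]
    rw [Matrix.mul_apply] at h1
    have h2 : ∑ j, (‖v j‖ ^ 2 : ℂ) = 1 := by
      rw [← h1]
      refine Finset.sum_congr rfl fun j _ => ?_
      push_cast
      rw [key]
      rfl
    have h3 : ∑ j, ‖v j‖ ^ 2 = 1 := by exact_mod_cast h2
    rw [EuclideanSpace.norm_eq, h3, Real.sqrt_one]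
  have hnw : ‖w‖ = Real.sqrt (hA.eigenvalues i) := by
    have h1 : (star U * (M.conjTranspose * M) * U) i i = (hA.eigenvalues i : ℂ) := by
      rw [hdiag]; simp [Matrix.diagonal_apply]
    have h1' : ((M * U).conjTranspose * (M * U)) i i = (hA.eigenvalues i : ℂ) := by
      rw [← h1]
      rw [Matrix.conjTranspose_mul]
      noncomm_ring
    rw [Matrix.mul_apply] at h1'
    have h2 : ∑ j, ‖w j‖ ^ 2 = hA.eigenvalues i := by
      have h2' : ∑ j, (‖w j‖ ^ 2 : ℂ) = (hA.eigenvalues i : ℂ) := by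
        rw [← h1']
        refine Finset.sum_congr rfl fun j _ => ?_
        push_cast
        rw [key, Matrix.conjTranspose_apply]
        rfl
      exact_mod_cast h2'
    rw [EuclideanSpace.norm_eq, h2]
  calc ‖(star U * M * U).diag i‖ = ‖(inner ℂ v w : ℂ)‖ := by
        rw [hdiagE]
      _ ≤ ‖v‖ * ‖w‖ := norm_inner_le_norm v w
      _ = Real.sqrt (hA.eigenvalues i) := by rw [hnv, hnw, one_mul]
end
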